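/- arXiv:2006.13793 — 2 statements merged into one kernel-verified Lean document; each statement's English description precedes it below -/
import Mathlib

section
/- Let V and W be bars of Ã_ℝ, say V ≅ M_I and W ≅ M_J for bounded intervals I, J ⊂ ℝ. Then V is isomorphic to W if and only if there exists an integer n such that the map x ↦ x + 2nπ is a bijection from I onto J. -/
open Set

noncomputable section

/-- A continuous quiver of type Ã: the data of the (even) set `S` of sinks/sources
on the circle, described via the cardinality `2*m`-ish data `m` and the angles `α`.
When `m = 0` we are in the cyclic case and fix `α j = π j`. -/
structure AtR where
  m : ℕ
  α : ℤ → ℝ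
  mono : StrictMono α
  cyc : m = 0 → ∀ j : ℤ, α j = Real.pi * j
  per : m ≠ 0 → ∀ j : ℤ, α (j + 2 * m) = α j + 2 * Real.pi
  base0 : 0 ≤ α 0
  base1 : α 0 < 2 * Real.pi

namespace AtR

variable (Q : AtR)

/-- `covRel θ φ` holds iff there is a morphism `e^{iθ} → e^{iφ}` in the continuous
quiver of type Ã, presented on the universal cover `ℝ` of the circle.
In the cyclic case (`m = 0`) morphisms go counterclockwise, i.e. `θ ≤ φ`;
otherwise a morphism stays within one (lifted) arc `[α j, α (j+1)]` and goes
down on even arcs (towards the sink `α j`) and up on odd arcs. -/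
def covRel (θ φ : ℝ) : Prop :=
  if Q.m = 0 then θ ≤ φ
  else ∃ j : ℤ, θ ∈ Set.Icc (Q.α j) (Q.α (j + 1)) ∧ φ ∈ Set.Icc (Q.α j) (Q.α (j + 1)) ∧
    ((Even j ∧ φ ≤ θ) ∨ (¬ Even j ∧ θ ≤ φ))

variable {Q}

lemma arcs_overlap {j j' : ℤ} {x : ℝ}
    (hj : x ∈ Set.Icc (Q.α j) (Q.α (j + 1))) (hj' : x ∈ Set.Icc (Q.α j') (Q.α (j' + 1)))
    (hne : j ≠ j') :
    (j' = j + 1 ∧ x = Q.α (j + 1)) ∨ (j = j' + 1 ∧ x = Q.α j) := by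
  rcases lt_or_gt_of_ne hne with h | h
  · left
    have h1 : j + 1 ≤ j' := by omega
    have h2 : Q.α (j + 1) ≤ Q.α j' := Q.mono.monotone h1
    have hx : x = Q.α (j + 1) := le_antisymm hj.2 (le_trans h2 hj'.1)
    have hx2 : Q.α (j + 1) = Q.α j' := le_antisymm h2 (hx ▸ hj'.1)
    exact ⟨(Q.mono.injective hx2).symm, hx⟩
  · right
    have h1 : j' + 1 ≤ j := by omega
    have h2 : Q.α (j' + 1) ≤ Q.α j := Q.mono.monotone h1
    have hx : x = Q.α (j' + 1) := le_antisymm hj'.2 (le_trans h2 hj.1)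
    have hx2 : Q.α (j' + 1) = Q.α j := le_antisymm h2 (hx ▸ hj.1)
    exact ⟨Q.mono.injective hx2.symm, hx.trans hx2⟩

/-- Key lemma: if there are morphisms `θ → φ` and `φ → ψ` then `φ` lies in the
convex hull of `{θ, ψ}`. -/
lemma covRel_hull {θ φ ψ : ℝ} (h1 : Q.covRel θ φ) (h2 : Q.covRel φ ψ) :
    min θ ψ ≤ φ ∧ φ ≤ max θ ψ := by
  unfold covRel at h1 h2
  by_cases hm : Q.m = 0
  · rw [if_pos hm] at h1 h2
    exact ⟨le_trans (min_le_left _ _) h1, le_trans h2 (le_max_right _ _)⟩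
  · rw [if_neg hm] at h1 h2
    obtain ⟨j, hθ, hφ, hp⟩ := h1
    obtain ⟨j2, hφ2, hψ, hp2⟩ := h2
    by_cases hjj : j = j2
    · subst hjj
      rcases hp with ⟨he, hle⟩ | ⟨ho, hle⟩ <;> rcases hp2 with ⟨he2, hle2⟩ | ⟨ho2, hle2⟩
      · exact ⟨le_trans (min_le_right _ _) hle2, le_trans hle (le_max_left _ _)⟩
      · exact absurd he ho2
      · exact absurd he2 ho
      · exact ⟨le_trans (min_le_left _ _) hle, le_trans hle2 (le_max_right _ _)⟩
    · rcases arcs_overlap hφ hφ2 hjj with ⟨hj2, hφe⟩ | ⟨hj2, hφe⟩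
      · -- j2 = j + 1, φ = α (j+1)
        rcases hp with ⟨he, hle⟩ | ⟨ho, hle⟩
        · -- Even j, φ ≤ θ and θ ≤ α (j+1) = φ so θ = φ
          have hθφ : θ = φ := le_antisymm (hφe ▸ hθ.2) hle
          rw [← hθφ]
          exact ⟨min_le_left _ _, le_max_left _ _⟩
        · -- Odd j so j2 = j+1 is even
          have he2 : Even j2 := by
            rw [hj2]; rcases Int.even_or_odd j with h | h
            · exact absurd h ho
            · exact h.add_one
          rcases hp2 with ⟨_, hle2⟩ | ⟨ho2, _⟩
          · -- ψ ≤ φ, but φ = α j2 is the bottom of the arc of j2, so ψ = φ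
            have hψφ : ψ = φ := by
              have : Q.α j2 ≤ ψ := hψ.1
              have hb : φ = Q.α j2 := by rw [hj2]; exact hφe
              linarith [hb ▸ this]
            rw [← hψφ]
            exact ⟨min_le_right _ _, le_max_right _ _⟩
          · exact absurd he2 ho2
      · -- j = j2 + 1, φ = α j
        rcases hp2 with ⟨he2, hle2⟩ | ⟨ho2, hle2⟩
        · -- Even j2, ψ ≤ φ; φ = α j = α (j2+1) is the top of arc j2... and j odd
          have ho : ¬ Even j := by
            rw [hj2]; intro h
            exact (Int.even_add_one.mp h) he2
          rcases hp with ⟨he', _⟩ | ⟨_, hle⟩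
          · exact absurd he' ho
          · -- θ ≤ φ, φ = α j is bottom of arc j, so θ = φ
            have hθφ : θ = φ := le_antisymm hle (hφe ▸ hθ.1)
            rw [← hθφ]
            exact ⟨min_le_left _ _, le_max_left _ _⟩
        · -- Odd j2, φ ≤ ψ; φ = α (j2+1) top of arc j2 so ψ = φ
          have hψφ : ψ = φ := by
            have hup : ψ ≤ Q.α (j2 + 1) := hψ.2
            have hb : φ = Q.α (j2 + 1) := by rw [← hj2]; exact hφe
            linarith [hb ▸ hup]
          rw [← hψφ]
          exact ⟨min_le_right _ _, le_max_right _ _⟩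

lemma covRel_up (j : ℤ) (h : Q.m = 0 ∨ ¬ Even j) : Q.covRel (Q.α j) (Q.α (j + 1)) := by
  unfold covRel
  split_ifs with hm
  · exact Q.mono.monotone (by omega)
  · rcases h with h0 | hodd
    · exact absurd h0 hm
    · exact ⟨j, ⟨le_rfl, Q.mono.monotone (by omega)⟩,
        ⟨Q.mono.monotone (by omega), le_rfl⟩,
        Or.inr ⟨hodd, Q.mono.monotone (by omega)⟩⟩

lemma covRel_down (j : ℤ) (hm : Q.m ≠ 0) (he : Even j) :
    Q.covRel (Q.α (j + 1)) (Q.α j) := by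
  unfold covRel
  rw [if_neg hm]
  exact ⟨j, ⟨Q.mono.monotone (by omega), le_rfl⟩, ⟨le_rfl, Q.mono.monotone (by omega)⟩,
    Or.inl ⟨he, Q.mono.monotone (by omega)⟩⟩

variable (Q)

/-- The number of arcs used to travel once around the circle. -/
def periodN : ℕ := if Q.m = 0 then 2 else 2 * Q.m

lemma periodN_pos : 0 < Q.periodN := by
  unfold periodN; split_ifs <;> omega

lemma α_periodN : Q.α (Q.periodN : ℤ) = Q.α 0 + 2 * Real.pi := by
  unfold periodN
  split_ifs with hm
  · have h2 : ((2:ℕ):ℤ) = 2 := by norm_cast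
    rw [h2, Q.cyc hm 2, Q.cyc hm 0]
    push_cast; ring
  · have := Q.per hm 0
    rw [zero_add] at this
    rw [← this]
    norm_cast

end AtR
/-- A representation (i.e. an `S¹` persistence module) of the continuous quiver of
type Ã, presented equivariantly on the universal cover: vector spaces `obj θ`,
linear maps along every morphism of the quiver (encoded by `covRel`), and a
periodicity isomorphism `per` identifying `obj (θ + 2π)` with `obj θ`,
compatibly with the maps. -/
structure SRep (k : Type) [Field k] (Q : AtR) where
  obj : ℝ → Type
  [instAdd : ∀ θ, AddCommGroup (obj θ)]
  [instMod : ∀ θ, Module k (obj θ)]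
  map : ∀ {θ φ : ℝ}, Q.covRel θ φ → (obj θ →ₗ[k] obj φ)
  map_id : ∀ (θ : ℝ) (h : Q.covRel θ θ), map h = LinearMap.id
  map_comp : ∀ {θ φ ψ : ℝ} (h1 : Q.covRel θ φ) (h2 : Q.covRel φ ψ) (h3 : Q.covRel θ ψ),
      map h3 = (map h2).comp (map h1)
  per : ∀ θ : ℝ, obj (θ + 2 * Real.pi) ≃ₗ[k] obj θ
  per_map : ∀ {θ φ : ℝ} (h : Q.covRel θ φ) (h' : Q.covRel (θ + 2 * Real.pi) (φ + 2 * Real.pi)),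
      (map h).comp (per θ).toLinearMap = ((per φ).toLinearMap).comp (map h')

attribute [instance] SRep.instAdd SRep.instMod

namespace SRep

variable {k : Type} [Field k] {Q : AtR}

lemma per_map_apply (V : SRep k Q) {θ φ : ℝ} (h : Q.covRel θ φ)
    (h' : Q.covRel (θ + 2 * Real.pi) (φ + 2 * Real.pi)) (x : V.obj (θ + 2 * Real.pi)) :
    V.map h (V.per θ x) = V.per φ (V.map h' x) :=
  LinearMap.congr_fun (V.per_map h h') x

/-- Transport along an equality of points of the cover. -/
def castO (V : SRep k Q) {a b : ℝ} (h : a = b) : V.obj a ≃ₗ[k] V.obj b :=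
  h ▸ LinearEquiv.refl k (V.obj a)

/-- A family of linear maps is a morphism of representations if it is natural with
respect to all the structure maps and the periodicity isomorphisms. -/
def IsHomFam (V W : SRep k Q) (f : ∀ θ, V.obj θ →ₗ[k] W.obj θ) : Prop :=
  (∀ {θ φ : ℝ} (h : Q.covRel θ φ) (v : V.obj θ), f φ (V.map h v) = W.map h (f θ v)) ∧
  (∀ (θ : ℝ) (v : V.obj (θ + 2 * Real.pi)), f θ (V.per θ v) = W.per θ (f (θ + 2 * Real.pi) v))

/-- Two representations are isomorphic if there is a family of linear isomorphisms
natural with respect to the structure maps and the periodicity isomorphisms. -/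
def RepIso (V W : SRep k Q) : Prop :=
  ∃ e : ∀ θ, V.obj θ ≃ₗ[k] W.obj θ,
    (∀ {θ φ : ℝ} (h : Q.covRel θ φ) (v : V.obj θ), e φ (V.map h v) = W.map h (e θ v)) ∧
    (∀ (θ : ℝ) (v : V.obj (θ + 2 * Real.pi)), e θ (V.per θ v) = W.per θ (e (θ + 2 * Real.pi) v))

/-- `U` is a (direct) summand of `V`. -/
def SummandOf (U V : SRep k Q) : Prop :=
  ∃ (f : ∀ θ, U.obj θ →ₗ[k] V.obj θ) (g : ∀ θ, V.obj θ →ₗ[k] U.obj θ),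
    IsHomFam U V f ∧ IsHomFam V U g ∧ ∀ (θ : ℝ) (u : U.obj θ), g θ (f θ u) = u

/-- A representation is nonzero if some of its spaces is nonzero. -/
def Nonzero (V : SRep k Q) : Prop := ∃ (θ : ℝ) (v : V.obj θ), v ≠ 0

/-- Pointwise finite-dimensional. -/
def Pwf (V : SRep k Q) : Prop := ∀ θ, FiniteDimensional k (V.obj θ)

/-- Binary direct sum of representations. -/
def prod (V W : SRep k Q) : SRep k Q where
  obj θ := V.obj θ × W.obj θ
  map h := (V.map h).prodMap (W.map h)
  map_id θ h := by
    rw [V.map_id θ h, W.map_id θ h]; exact LinearMap.prodMap_id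
  map_comp h1 h2 h3 := by
    try dsimp only
    rw [V.map_comp h1 h2 h3, W.map_comp h1 h2 h3]
    exact (LinearMap.prodMap_comp _ _ _ _).symm
  per θ := (V.per θ).prodCongr (W.per θ)
  per_map h h' := by
    try dsimp only
    apply LinearMap.ext
    rintro ⟨a, b⟩
    simp only [LinearMap.comp_apply, LinearEquiv.coe_coe, LinearMap.prodMap_apply,
      LinearEquiv.prodCongr_apply]
    exact Prod.ext (V.per_map_apply h h' a) (W.per_map_apply h h' b)

/-- Arbitrary direct sums of representations. -/
def dsum {B : Type} (A : B → SRep k Q) : SRep k Q where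
  obj θ := Π₀ b, (A b).obj θ
  map h := DFinsupp.mapRange.linearMap fun b => (A b).map h
  map_id θ h := by
    try dsimp only
    have : (fun b => (A b).map h) = fun b => (LinearMap.id : (A b).obj θ →ₗ[k] _) := by
      funext b; exact (A b).map_id θ h
    rw [this]; exact DFinsupp.mapRange.linearMap_id
  map_comp h1 h2 h3 := by
    try dsimp only
    have : (fun b => (A b).map h3) = fun b => ((A b).map h2).comp ((A b).map h1) := by
      funext b; exact (A b).map_comp h1 h2 h3
    rw [this]; exact DFinsupp.mapRange.linearMap_comp _ _
  per θ := DFinsupp.mapRange.linearEquiv fun b => (A b).per θ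
  per_map h h' := by
    try dsimp only
    apply LinearMap.ext
    intro x
    ext b
    simp only [LinearMap.comp_apply, LinearEquiv.coe_coe,
      DFinsupp.mapRange.linearEquiv_apply, DFinsupp.mapRange.linearMap_apply,
      DFinsupp.mapRange_apply]
    exact (A b).per_map_apply h h' (x b)

/-- Indecomposability. -/
def Indecomposable (V : SRep k Q) : Prop :=
  V.Nonzero ∧ ∀ A B : SRep k Q, A.Nonzero → B.Nonzero → ¬ RepIso V (A.prod B)

end SRep
/-! ## Bars -/

/-- The basis of the bar `M_I` at the point `e^{iθ}`: the set `ξ⁻¹(e^{iθ}) ∩ I`. -/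
def barIdx (I : Set ℝ) (θ : ℝ) : Type :=
  {β : ℝ // β ∈ I ∧ ∃ n : ℤ, β = θ + 2 * Real.pi * n}

/-- The canonical identification of the bars' bases over `θ + 2π` and `θ`. -/
def barShift (I : Set ℝ) (θ : ℝ) : barIdx I (θ + 2 * Real.pi) ≃ barIdx I θ where
  toFun b := ⟨b.1, b.2.1, by
    obtain ⟨n, hn⟩ := b.2.2
    exact ⟨n + 1, by push_cast; linarith⟩⟩
  invFun b := ⟨b.1, b.2.1, by
    obtain ⟨n, hn⟩ := b.2.2
    exact ⟨n - 1, by push_cast; linarith⟩⟩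
  left_inv b := by apply Subtype.ext; rfl
  right_inv b := by apply Subtype.ext; rfl

variable (k : Type) [Field k]

/-- The structure map of the bar `M_I` along a morphism `θ → φ`:
a basis vector `b_β` is sent to `b_{β - θ + φ}` when `β - θ + φ ∈ I` and to `0`
otherwise. -/
def barMapHom (I : Set ℝ) (θ φ : ℝ) :
    (barIdx I θ →₀ k) →ₗ[k] (barIdx I φ →₀ k) := by
  classical
  exact Finsupp.linearCombination k (fun β : barIdx I θ =>
    if h : β.1 - θ + φ ∈ I then
      Finsupp.single (⟨β.1 - θ + φ, h, by
        obtain ⟨n, hn⟩ := β.2.2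
        exact ⟨n, by rw [hn]; ring⟩⟩ : barIdx I φ) (1 : k)
    else 0)

variable {k}

namespace SRep

variable {Q : AtR}

/-- `V` is (isomorphic to) the bar `M_I` on the bounded interval `I ⊂ ℝ`. -/
def BarOn (I : Set ℝ) (V : SRep k Q) : Prop :=
  I.Nonempty ∧ Bornology.IsBounded I ∧ I.OrdConnected ∧
  ∃ e : ∀ θ, V.obj θ ≃ₗ[k] (barIdx I θ →₀ k),
    (∀ {θ φ : ℝ} (h : Q.covRel θ φ) (v : V.obj θ),
        e φ (V.map h v) = barMapHom k I θ φ (e θ v)) ∧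
    (∀ (θ : ℝ) (v : V.obj (θ + 2 * Real.pi)),
        e θ (V.per θ v) = Finsupp.equivMapDomain (barShift I θ) (e (θ + 2 * Real.pi) v))

/-- `V` is a bar. -/
def IsBar (V : SRep k Q) : Prop := ∃ I : Set ℝ, BarOn I V

end SRep
/-! ## Jordan cells -/

namespace SRep

variable {k : Type} [Field k] {Q : AtR}

/-- One step of the monodromy: the isomorphism `V(α j) ≃ V(α (j+1))` obtained
from the structure map along the arc (or its inverse, depending on the
orientation of the arc). -/
def step (V : SRep k Q)
    (hiso : ∀ ⦃θ φ : ℝ⦄ (h : Q.covRel θ φ), Function.Bijective (V.map h)) (j : ℤ) :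
    V.obj (Q.α j) ≃ₗ[k] V.obj (Q.α (j + 1)) :=
  if h : Q.m = 0 ∨ ¬ Even j then
    LinearEquiv.ofBijective _ (hiso (AtR.covRel_up j h))
  else
    (LinearEquiv.ofBijective _ (hiso (AtR.covRel_down j
      (by push_neg at h; exact h.1) (by push_neg at h; exact h.2)))).symm

/-- The zig-zag isomorphism from `V(α 0)` to `V(α n)`. -/
def zig (V : SRep k Q)
    (hiso : ∀ ⦃θ φ : ℝ⦄ (h : Q.covRel θ φ), Function.Bijective (V.map h)) :
    (n : ℕ) → (V.obj (Q.α 0) ≃ₗ[k] V.obj (Q.α (n : ℤ)))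
  | 0 => V.castO (congrArg Q.α (by norm_num))
  | (n + 1) => ((V.zig hiso n).trans (V.step hiso (n : ℤ))).trans
      (V.castO (congrArg Q.α (by push_cast; ring)))

/-- The monodromy automorphism `V̂` of `V(α 0)`: travel once counterclockwise
around the circle (via `zig`) and come back via the periodicity isomorphism. -/
def monodromy (V : SRep k Q)
    (hiso : ∀ ⦃θ φ : ℝ⦄ (h : Q.covRel θ φ), Function.Bijective (V.map h)) :
    V.obj (Q.α 0) ≃ₗ[k] V.obj (Q.α 0) :=
  ((V.zig hiso Q.periodN).trans (V.castO Q.α_periodN)).trans (V.per (Q.α 0))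

/-- `V` is a Jordan cell: its spaces have a constant finite dimension `d ≥ 1`,
all its structure maps are isomorphisms, and `V(α 0)` admits no direct sum
decomposition into two nonzero subspaces invariant under the monodromy. -/
structure IsJordanCell (V : SRep k Q) : Prop where
  bij : ∀ ⦃θ φ : ℝ⦄ (h : Q.covRel θ φ), Function.Bijective (V.map h)
  dim : ∃ d : ℕ, 1 ≤ d ∧ ∀ θ, Module.finrank k (V.obj θ) = d
  indec : ∀ U W : Submodule k (V.obj (Q.α 0)), IsCompl U W →
      (∀ u ∈ U, V.monodromy bij u ∈ U) → (∀ w ∈ W, V.monodromy bij w ∈ W) →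
      U = ⊥ ∨ W = ⊥

end SRep
/-! ## Restriction -/

/-- The periodization of a subset of `ℝ`: the full preimage under `ξ` of its image
in the circle. -/
def periodize (s : Set ℝ) : Set ℝ := {θ | ∃ n : ℤ, θ + 2 * Real.pi * n ∈ s}

lemma periodize_shift (s : Set ℝ) (θ : ℝ) :
    θ ∈ periodize s ↔ θ + 2 * Real.pi ∈ periodize s := by
  constructor
  · rintro ⟨n, hn⟩
    refine ⟨n - 1, ?_⟩
    push_cast
    rw [show θ + 2 * Real.pi + 2 * Real.pi * ((n : ℝ) - 1) = θ + 2 * Real.pi * (n : ℝ) from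
      by ring]
    exact hn
  · rintro ⟨n, hn⟩
    refine ⟨n + 1, ?_⟩
    push_cast
    rw [show θ + 2 * Real.pi * ((n : ℝ) + 1) = θ + 2 * Real.pi + 2 * Real.pi * (n : ℝ) from
      by ring]
    exact hn

namespace SRep

open Classical

variable {k : Type} [Field k] {Q : AtR}

/-- The restriction `V|_A` of a representation to a (2π-periodic) subset `A ⊂ ℝ`
corresponding to a subset of the circle.  Its space at `θ ∈ A` is `V(θ)` and `0`
elsewhere; its structure map along a morphism `θ → φ` is `V(θ,φ)` when every
point through which the morphism factors lies in `A` (the set of such points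
being the interval `[min θ φ, max θ φ]`), and `0` otherwise. -/
def restrict (V : SRep k Q) (A : Set ℝ) (hA : ∀ θ, θ ∈ A ↔ θ + 2 * Real.pi ∈ A) :
    SRep k Q where
  obj θ := PLift (θ ∈ A) → V.obj θ
  map {θ φ} h :=
    { toFun := fun F _ =>
        if c : Set.Icc (min θ φ) (max θ φ) ⊆ A then
          V.map h (F ⟨c ⟨min_le_left θ φ, le_max_left θ φ⟩⟩) else 0
      map_add' := by
        intro F G; funext hφ
        by_cases c : Set.Icc (min θ φ) (max θ φ) ⊆ A <;> simp [c]
      map_smul' := by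
        intro a F; funext hφ
        by_cases c : Set.Icc (min θ φ) (max θ φ) ⊆ A <;> simp [c] }
  map_id θ h := by
    apply LinearMap.ext; intro F; funext hφ
    have c : Set.Icc (min θ θ) (max θ θ) ⊆ A := by
      rw [min_self, max_self, Set.Icc_self]
      exact Set.singleton_subset_iff.mpr hφ.down
    simp only [LinearMap.coe_mk, AddHom.coe_mk, LinearMap.id_coe, id_eq]
    rw [dif_pos c, V.map_id θ h]
    rfl
  map_comp {θ φ ψ} h1 h2 h3 := by
    apply LinearMap.ext; intro F; funext hψ
    have hkey := AtR.covRel_hull h1 h2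
    have s1 : Set.Icc (min θ φ) (max θ φ) ⊆ Set.Icc (min θ ψ) (max θ ψ) :=
      Set.Icc_subset_Icc (le_min (min_le_left θ ψ) hkey.1) (max_le (le_max_left θ ψ) hkey.2)
    have s2 : Set.Icc (min φ ψ) (max φ ψ) ⊆ Set.Icc (min θ ψ) (max θ ψ) :=
      Set.Icc_subset_Icc (le_min hkey.1 (min_le_right θ ψ)) (max_le hkey.2 (le_max_right θ ψ))
    by_cases c1 : Set.Icc (min θ φ) (max θ φ) ⊆ A
    · by_cases c2 : Set.Icc (min φ ψ) (max φ ψ) ⊆ A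
      · have c3 : Set.Icc (min θ ψ) (max θ ψ) ⊆ A := by
          intro z hz
          rcases le_total θ ψ with hθψ | hθψ
          · rw [min_eq_left hθψ, max_eq_right hθψ] at hz
            rcases le_total z φ with hzφ | hzφ
            · exact c1 ⟨le_trans (min_le_left θ φ) hz.1, le_trans hzφ (le_max_right θ φ)⟩
            · exact c2 ⟨le_trans (min_le_left φ ψ) hzφ, le_trans hz.2 (le_max_right φ ψ)⟩
          · rw [min_eq_right hθψ, max_eq_left hθψ] at hz
            rcases le_total z φ with hzφ | hzφ
            · exact c2 ⟨le_trans (min_le_right φ ψ) hz.1, le_trans hzφ (le_max_left φ ψ)⟩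
            · exact c1 ⟨le_trans (min_le_right θ φ) hzφ, le_trans hz.2 (le_max_left θ φ)⟩
        simp only [LinearMap.coe_mk, AddHom.coe_mk, LinearMap.comp_apply]
        rw [dif_pos c3, dif_pos c2, dif_pos c1, V.map_comp h1 h2 h3]
        rfl
      · have c3 : ¬ Set.Icc (min θ ψ) (max θ ψ) ⊆ A := fun c3 => c2 fun z hz => c3 (s2 hz)
        simp only [LinearMap.coe_mk, AddHom.coe_mk, LinearMap.comp_apply]
        rw [dif_neg c3, dif_neg c2]
    · have c3 : ¬ Set.Icc (min θ ψ) (max θ ψ) ⊆ A := fun c3 => c1 fun z hz => c3 (s1 hz)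
      simp only [LinearMap.coe_mk, AddHom.coe_mk, LinearMap.comp_apply]
      rw [dif_neg c3]
      by_cases c2 : Set.Icc (min φ ψ) (max φ ψ) ⊆ A
      · rw [dif_pos c2, dif_neg c1, map_zero]
      · rw [dif_neg c2]
  per θ :=
    { toFun := fun F hθ => V.per θ (F ⟨(hA θ).mp hθ.down⟩)
      map_add' := by intro F G; funext hθ; simp
      map_smul' := by intro a F; funext hθ; simp
      invFun := fun G h2 => (V.per θ).symm (G ⟨(hA θ).mpr h2.down⟩)
      left_inv := by intro F; funext h2; simp
      right_inv := by intro G; funext hθ; simp }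
  per_map {θ φ} h h' := by
    apply LinearMap.ext; intro F; funext hφ
    have e1 : min (θ + 2 * Real.pi) (φ + 2 * Real.pi) = min θ φ + 2 * Real.pi :=
      min_add_add_right θ φ _
    have e2 : max (θ + 2 * Real.pi) (φ + 2 * Real.pi) = max θ φ + 2 * Real.pi :=
      max_add_add_right θ φ _
    have hcc : (Set.Icc (min (θ + 2 * Real.pi) (φ + 2 * Real.pi))
        (max (θ + 2 * Real.pi) (φ + 2 * Real.pi)) ⊆ A) ↔
        (Set.Icc (min θ φ) (max θ φ) ⊆ A) := by
      rw [e1, e2]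
      constructor
      · intro c z hz
        rw [hA z]
        exact c ⟨by linarith [hz.1], by linarith [hz.2]⟩
      · intro c z hz
        have h2 : z - 2 * Real.pi ∈ Set.Icc (min θ φ) (max θ φ) :=
          ⟨by linarith [hz.1], by linarith [hz.2]⟩
        have h3 := (hA (z - 2 * Real.pi)).mp (c h2)
        simpa using h3
    simp only [LinearMap.coe_mk, AddHom.coe_mk, LinearMap.comp_apply, LinearEquiv.coe_coe,
      LinearEquiv.coe_mk]
    by_cases c : Set.Icc (min θ φ) (max θ φ) ⊆ A
    · rw [dif_pos c, dif_pos (hcc.mpr c)]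
      exact V.per_map_apply h h' _
    · rw [dif_neg c, dif_neg (fun cc => c (hcc.mp cc)), map_zero]

/-- `V` is finitistic: it is pointwise finite-dimensional and for each arc
`R̄_n = [α n, α (n+1)]`, every bar in the bar code decomposition of the
restriction `V|_{R̄_n}` has support touching an endpoint of the arc. -/
def Finitistic (V : SRep k Q) : Prop :=
  Pwf V ∧ ∀ n : ℤ, ∃ (B : Type) (Wb : B → SRep k Q) (I : B → Set ℝ),
    (∀ b, BarOn (I b) (Wb b) ∧ I b ⊆ Set.Icc (Q.α n) (Q.α (n + 1)) ∧
      (Q.α n ∈ I b ∨ Q.α (n + 1) ∈ I b)) ∧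
    RepIso (V.restrict (periodize (Set.Icc (Q.α n) (Q.α (n + 1))))
      (periodize_shift _)) (dsum Wb)

end SRep
/-! ## Representations of (finite) quivers of type Ã_n

An `Ã_n` quiver has `N = n + 1` vertices, indexed by `ZMod N`, arranged
counterclockwise in a cycle, with exactly one arrow between the vertices `i` and
`i + 1` for each `i : ZMod N`; the orientation function `o` records its direction
(`o i = true` iff the arrow goes `i → i + 1`). -/

/-- A representation of the `Ã_{N-1}` quiver with orientation `o`. -/
structure CycRep (k : Type) [Field k] (N : ℕ) (o : ZMod N → Bool) where
  M : ZMod N → Type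
  [instAdd : ∀ i, AddCommGroup (M i)]
  [instMod : ∀ i, Module k (M i)]
  up : ∀ i : ZMod N, o i = true → (M i →ₗ[k] M (i + 1))
  down : ∀ i : ZMod N, o i = false → (M (i + 1) →ₗ[k] M i)

attribute [instance] CycRep.instAdd CycRep.instMod

namespace CycRep

variable {k : Type} [Field k] {N : ℕ} {o : ZMod N → Bool}

/-- Transport along an equality of vertices. -/
def castM (A : CycRep k N o) {i i' : ZMod N} (h : i = i') : A.M i ≃ₗ[k] A.M i' :=
  h ▸ LinearEquiv.refl k (A.M i)

/-- Isomorphism of representations of the `Ã_{N-1}` quiver. -/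
def Iso (A B : CycRep k N o) : Prop :=
  ∃ e : ∀ i, A.M i ≃ₗ[k] B.M i,
    (∀ (i : ZMod N) (h : o i = true) (v : A.M i),
        e (i + 1) (A.up i h v) = B.up i h (e i v)) ∧
    (∀ (i : ZMod N) (h : o i = false) (v : A.M (i + 1)),
        e i (A.down i h v) = B.down i h (e (i + 1) v))

def Nonzero (A : CycRep k N o) : Prop := ∃ (i : ZMod N) (v : A.M i), v ≠ 0

/-- Binary direct sum. -/
def prod (A B : CycRep k N o) : CycRep k N o where
  M i := A.M i × B.M i
  up i h := (A.up i h).prodMap (B.up i h)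
  down i h := (A.down i h).prodMap (B.down i h)

/-- Arbitrary direct sum. -/
def dsum {B : Type} (A : B → CycRep k N o) : CycRep k N o where
  M i := Π₀ b, (A b).M i
  up i h := DFinsupp.mapRange.linearMap fun b => (A b).up i h
  down i h := DFinsupp.mapRange.linearMap fun b => (A b).down i h

def Indecomposable (A : CycRep k N o) : Prop :=
  A.Nonzero ∧ ∀ B C : CycRep k N o, B.Nonzero → C.Nonzero → ¬ Iso A (B.prod C)

end CycRep

/-- The basis of the bar on the interval `{a, ..., b} ⊂ ℤ` at the vertex `i`:
integers in the interval congruent to `i` mod `N`. -/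
def cycIdx (N : ℕ) (a b : ℤ) (i : ZMod N) : Type :=
  {m : ℤ // m ∈ Set.Icc a b ∧ ((m : ZMod N) = i)}

variable (k : Type) [Field k]

open Classical in
/-- The bar's map along an arrow `i → i + 1` : `b_m ↦ b_{m+1}` when `m+1` stays in
the interval, and `0` otherwise. -/
def cycBarUp (N : ℕ) (a b : ℤ) (i : ZMod N) :
    (cycIdx N a b i →₀ k) →ₗ[k] (cycIdx N a b (i + 1) →₀ k) :=
  Finsupp.linearCombination k (fun m : cycIdx N a b i =>
    if hm : m.1 + 1 ∈ Set.Icc a b then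
      Finsupp.single (⟨m.1 + 1, hm, by push_cast; rw [m.2.2]⟩ : cycIdx N a b (i + 1)) (1 : k)
    else 0)

open Classical in
/-- The bar's map along an arrow `i + 1 → i` : `b_m ↦ b_{m-1}` when `m-1` stays in
the interval, and `0` otherwise. -/
def cycBarDown (N : ℕ) (a b : ℤ) (i : ZMod N) :
    (cycIdx N a b (i + 1) →₀ k) →ₗ[k] (cycIdx N a b i →₀ k) :=
  Finsupp.linearCombination k (fun m : cycIdx N a b (i + 1) =>
    if hm : m.1 - 1 ∈ Set.Icc a b then
      Finsupp.single (⟨m.1 - 1, hm, by push_cast; rw [m.2.2]; ring⟩ : cycIdx N a b i) (1 : k)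
    else 0)

variable {k}

namespace CycRep

variable {k : Type} [Field k] {N : ℕ} {o : ZMod N → Bool}

/-- `A` is (isomorphic to) the bar on the interval `{a, ..., b}` of `ℤ`. -/
def BarOn (a b : ℤ) (A : CycRep k N o) : Prop :=
  a ≤ b ∧ ∃ e : ∀ i, A.M i ≃ₗ[k] (cycIdx N a b i →₀ k),
    (∀ (i : ZMod N) (h : o i = true) (v : A.M i),
        e (i + 1) (A.up i h v) = cycBarUp k N a b i (e i v)) ∧
    (∀ (i : ZMod N) (h : o i = false) (v : A.M (i + 1)),
        e i (A.down i h v) = cycBarDown k N a b i (e (i + 1) v))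

def IsBar (A : CycRep k N o) : Prop := ∃ a b : ℤ, BarOn a b A

/-- One step `M i ≃ M (i+1)` of the monodromy of a representation all of whose
arrow maps are isomorphisms. -/
def stepC (A : CycRep k N o)
    (hup : ∀ (i : ZMod N) (h : o i = true), Function.Bijective (A.up i h))
    (hdown : ∀ (i : ZMod N) (h : o i = false), Function.Bijective (A.down i h))
    (i : ZMod N) : A.M i ≃ₗ[k] A.M (i + 1) :=
  if h : o i = true then LinearEquiv.ofBijective _ (hup i h)
  else (LinearEquiv.ofBijective _ (hdown i (by revert h; cases o i <;> simp))).symm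

def zigC (A : CycRep k N o)
    (hup : ∀ (i : ZMod N) (h : o i = true), Function.Bijective (A.up i h))
    (hdown : ∀ (i : ZMod N) (h : o i = false), Function.Bijective (A.down i h)) :
    (n : ℕ) → (A.M 0 ≃ₗ[k] A.M (n : ZMod N))
  | 0 => A.castM (by norm_num)
  | (n + 1) => ((A.zigC hup hdown n).trans (A.stepC hup hdown (n : ZMod N))).trans
      (A.castM (by push_cast; ring))

/-- The monodromy `M̂ : M 0 ≃ M 0` obtained by composing the arrow maps and their
inverses once around the cycle. -/
def monodromyC (A : CycRep k N o)
    (hup : ∀ (i : ZMod N) (h : o i = true), Function.Bijective (A.up i h))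
    (hdown : ∀ (i : ZMod N) (h : o i = false), Function.Bijective (A.down i h)) :
    A.M 0 ≃ₗ[k] A.M 0 :=
  (A.zigC hup hdown N).trans (A.castM (by simp))

/-- `A` is a Jordan cell representation of the `Ã_{N-1}` quiver. -/
structure IsJordan (A : CycRep k N o) : Prop where
  bijUp : ∀ (i : ZMod N) (h : o i = true), Function.Bijective (A.up i h)
  bijDown : ∀ (i : ZMod N) (h : o i = false), Function.Bijective (A.down i h)
  dim : ∃ d : ℕ, 1 ≤ d ∧ ∀ i, Module.finrank k (A.M i) = d
  indec : ∀ U W : Submodule k (A.M 0), IsCompl U W →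
      (∀ u ∈ U, A.monodromyC bijUp bijDown u ∈ U) →
      (∀ w ∈ W, A.monodromyC bijUp bijDown w ∈ W) → U = ⊥ ∨ W = ⊥

end CycRep
/-! ## Partitions of the circle and push downs -/

/-- A finite partition of the circle into (at least two) path-connected parts,
presented on the universal cover: `2π`-periodically ordered intervals `J j`
(`j : ℤ`), with `J (j + N)` the translate of `J j`; the parts of the circle are
the images of the `J j`, and `j` reduces mod `N` to the index of the part. -/
structure CircPartition (Q : AtR) where
  N : ℕ
  hN : 2 ≤ N
  J : ℤ → Set ℝ
  nonempty : ∀ j, (J j).Nonempty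
  ordconn : ∀ j, (J j).OrdConnected
  ordered : ∀ {j j' : ℤ}, j < j' → ∀ x ∈ J j, ∀ y ∈ J j', x < y
  cover : ∀ θ : ℝ, ∃ j, θ ∈ J j
  jper : ∀ (j : ℤ) (θ : ℝ), θ ∈ J j ↔ θ + 2 * Real.pi ∈ J (j + N)

namespace CircPartition

variable {Q : AtR} (C : CircPartition Q)

/-- The index of the part containing `θ`. -/
def partIdx (θ : ℝ) : ℤ := Classical.choose (C.cover θ)

lemma mem_partIdx (θ : ℝ) : θ ∈ C.J (C.partIdx θ) := Classical.choose_spec (C.cover θ)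

lemma partIdx_eq {θ : ℝ} {j : ℤ} (h : θ ∈ C.J j) : C.partIdx θ = j := by
  by_contra hne
  rcases lt_or_gt_of_ne hne with hlt | hlt
  · exact lt_irrefl θ (C.ordered hlt _ (C.mem_partIdx θ) _ h)
  · exact lt_irrefl θ (C.ordered hlt _ h _ (C.mem_partIdx θ))

lemma partIdx_shift (θ : ℝ) : C.partIdx (θ + 2 * Real.pi) = C.partIdx θ + C.N :=
  C.partIdx_eq ((C.jper _ _).mp (C.mem_partIdx θ))

/-- The index of the part containing `θ`, as a vertex of the auxiliary quiver. -/
def partZ (θ : ℝ) : ZMod C.N := ((C.partIdx θ : ℤ) : ZMod C.N)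

lemma partZ_shift (θ : ℝ) : C.partZ (θ + 2 * Real.pi) = C.partZ θ := by
  unfold partZ
  rw [C.partIdx_shift θ]
  push_cast
  simp

lemma partZ_congr {θ φ : ℝ} (hp : C.partIdx θ = C.partIdx φ) : C.partZ θ = C.partZ φ := by
  unfold partZ; rw [hp]

lemma partZ_succ {θ φ : ℝ} (hp : C.partIdx φ = C.partIdx θ + 1) :
    C.partZ θ + 1 = C.partZ φ := by
  unfold partZ; rw [hp]; push_cast; ring

lemma partZ_pred {θ φ : ℝ} (hp : C.partIdx θ = C.partIdx φ + 1) :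
    C.partZ θ = C.partZ φ + 1 := by
  unfold partZ; rw [hp]; push_cast; ring

/-- There is an arrow from the part of `J j` to the part of `J (j+1)` in the
auxiliary quiver (their union being automatically path-connected). -/
def dirUp (j : ℤ) : Prop := ∃ x ∈ C.J j, ∃ y ∈ C.J (j + 1), Q.covRel x y

/-- There is an arrow from the part of `J (j+1)` to the part of `J j`. -/
def dirDown (j : ℤ) : Prop := ∃ x ∈ C.J (j + 1), ∃ y ∈ C.J j, Q.covRel x y

end CircPartition

namespace SRep

variable {k : Type} [Field k] {Q : AtR}

/-- `U` is the push down to the continuous quiver of the representation `A` of the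
auxiliary `Ã_{N-1}` quiver of the partition `C` (with orientation `o`):
`U` is constant equal to `A.M i` on the `i`-th part, with identity maps within a
part, the maps of `A` across boundaries of parts, and the evident periodicity. -/
def PushdownOf (C : CircPartition Q) (o : ZMod C.N → Bool) (A : CycRep k C.N o)
    (U : SRep k Q) : Prop :=
  ∃ e : ∀ θ, U.obj θ ≃ₗ[k] A.M (C.partZ θ),
    (∀ {θ φ : ℝ} (h : Q.covRel θ φ) (hp : C.partIdx θ = C.partIdx φ) (v : U.obj θ),
        e φ (U.map h v) = A.castM (C.partZ_congr hp) (e θ v)) ∧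
    (∀ {θ φ : ℝ} (h : Q.covRel θ φ) (hp : C.partIdx φ = C.partIdx θ + 1)
        (ht : o (C.partZ θ) = true) (v : U.obj θ),
        e φ (U.map h v) = A.castM (C.partZ_succ hp) (A.up (C.partZ θ) ht (e θ v))) ∧
    (∀ {θ φ : ℝ} (h : Q.covRel θ φ) (hp : C.partIdx θ = C.partIdx φ + 1)
        (hf : o (C.partZ φ) = false) (v : U.obj θ),
        e φ (U.map h v) = A.down (C.partZ φ) hf (A.castM (C.partZ_pred hp) (e θ v))) ∧
    (∀ (θ : ℝ) (v : U.obj (θ + 2 * Real.pi)),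
        e θ (U.per θ v) = A.castM (C.partZ_shift θ) (e (θ + 2 * Real.pi) v))

/-- Transport between the values of `V` at representative points whose indices
agree modulo the period, using the periodicity isomorphism if needed. -/
def ptBridge (V : SRep k Q) (pt : ℤ → ℝ) (Nn : ℕ)
    (hper : ∀ j : ℤ, pt (j + (Nn : ℤ)) = pt j + 2 * Real.pi) {a b : ℤ}
    (h : a = b ∨ a = b + (Nn : ℤ)) : V.obj (pt a) ≃ₗ[k] V.obj (pt b) :=
  if he : a = b then V.castO (congrArg pt he)
  else (V.castO (show pt a = pt b + 2 * Real.pi by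
      rw [h.resolve_left he]; exact hper b)).trans (V.per (pt b))

lemma zmod_val_succ {N : ℕ} (hN : 2 ≤ N) (i : ZMod N) :
    (((i + 1 : ZMod N).val : ℤ) = (i.val : ℤ) + 1) ∨
      ((i.val : ℤ) + 1 = ((i + 1 : ZMod N).val : ℤ) + (N : ℤ)) := by
  haveI : NeZero N := ⟨by omega⟩
  haveI : Fact (1 < N) := ⟨by omega⟩
  have hval : (i + 1 : ZMod N).val = (i.val + 1) % N := by
    rw [ZMod.val_add, ZMod.val_one]
  have hlt : i.val < N := ZMod.val_lt i
  rcases Nat.lt_or_ge (i.val + 1) N with h | h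
  · left; rw [hval, Nat.mod_eq_of_lt h]; push_cast; ring
  · right
    have he : i.val + 1 = N := by omega
    rw [hval, he, Nat.mod_self]
    push_cast
    omega

/-- The auxiliary representation `M_V` of the auxiliary quiver of a partition `C`,
given by the values of `V` at the representative points `pt`. -/
def auxOfPoints (V : SRep k Q) (C : CircPartition Q) (o : ZMod C.N → Bool) (pt : ℤ → ℝ)
    (hper : ∀ j : ℤ, pt (j + (C.N : ℤ)) = pt j + 2 * Real.pi)
    (hup : ∀ (i : ZMod C.N), o i = true → Q.covRel (pt (i.val : ℤ)) (pt ((i.val : ℤ) + 1)))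
    (hdown : ∀ (i : ZMod C.N), o i = false → Q.covRel (pt ((i.val : ℤ) + 1)) (pt (i.val : ℤ))) :
    CycRep k C.N o where
  M i := V.obj (pt (i.val : ℤ))
  up i h := (V.ptBridge pt C.N hper
      ((zmod_val_succ C.hN i).imp Eq.symm id)).toLinearMap ∘ₗ V.map (hup i h)
  down i h := V.map (hdown i h) ∘ₗ (V.ptBridge pt C.N hper
      ((zmod_val_succ C.hN i).imp Eq.symm id)).symm.toLinearMap

/-- `U` is the refinement of `V` with respect to the partition `C` and the choice
of representative points `pt`: `U(θ) = V(pt (partIdx θ))`, with structure maps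
induced by those of `V` between representative points. -/
def RefinementOf (V : SRep k Q) (C : CircPartition Q) (pt : ℤ → ℝ)
    (hper : ∀ j : ℤ, pt (j + (C.N : ℤ)) = pt j + 2 * Real.pi) (U : SRep k Q) : Prop :=
  (∀ j, pt j ∈ C.J j) ∧
  ∃ e : ∀ θ, U.obj θ ≃ₗ[k] V.obj (pt (C.partIdx θ)),
    (∀ {θ φ : ℝ} (h : Q.covRel θ φ) (hp : C.partIdx θ = C.partIdx φ) (v : U.obj θ),
        e φ (U.map h v) = V.castO (congrArg pt hp) (e θ v)) ∧
    (∀ {θ φ : ℝ} (h : Q.covRel θ φ)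
        (hc : Q.covRel (pt (C.partIdx θ)) (pt (C.partIdx φ))) (v : U.obj θ),
        e φ (U.map h v) = V.map hc (e θ v)) ∧
    (∀ (θ : ℝ) (v : U.obj (θ + 2 * Real.pi)),
        e θ (U.per θ v) = V.per (pt (C.partIdx θ))
          ((V.castO (show pt (C.partIdx (θ + 2 * Real.pi)) = pt (C.partIdx θ) + 2 * Real.pi by
            rw [C.partIdx_shift θ]; exact hper _)) (e (θ + 2 * Real.pi) v)))

end SRep
/-! ## The endomorphism ring -/

namespace SRep

variable {k : Type} [Field k] {Q : AtR}

/-- The endomorphism ring of a representation: the subring of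
`∀ θ, End (V θ)` consisting of the natural families (with multiplication given by
pointwise composition). -/
def endSubring (V : SRep k Q) : Subring (∀ θ, Module.End k (V.obj θ)) where
  carrier := {f | IsHomFam V V f}
  mul_mem' := by
    rintro a b ⟨ha1, ha2⟩ ⟨hb1, hb2⟩
    constructor
    · intro θ φ h v
      simp only [Pi.mul_apply, Module.End.mul_apply]
      rw [hb1 h v, ha1 h]
    · intro θ v
      simp only [Pi.mul_apply, Module.End.mul_apply]
      rw [hb2 θ v, ha2 θ]
  one_mem' := by
    constructor
    · intro θ φ h v; simp
    · intro θ v; simp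
  add_mem' := by
    rintro a b ⟨ha1, ha2⟩ ⟨hb1, hb2⟩
    constructor
    · intro θ φ h v
      simp only [Pi.add_apply, LinearMap.add_apply]
      rw [ha1 h v, hb1 h v, map_add]
    · intro θ v
      simp only [Pi.add_apply, LinearMap.add_apply]
      rw [ha2 θ v, hb2 θ v, map_add]
  zero_mem' := by
    constructor
    · intro θ φ h v; simp
    · intro θ v; simp
  neg_mem' := by
    rintro a ⟨ha1, ha2⟩
    constructor
    · intro θ φ h v
      simp only [Pi.neg_apply, LinearMap.neg_apply]
      rw [ha1 h v, map_neg]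
    · intro θ v
      simp only [Pi.neg_apply, LinearMap.neg_apply]
      rw [ha2 θ v, map_neg]

end SRep

noncomputable section BarArith

open Set

local notation "P" => (2 * Real.pi)

lemma Ppos : (0:ℝ) < P := by positivity

/-- The set of lattice indices of the class of `x` hitting `S`. -/
def latset (x : ℝ) (S : Set ℝ) : Set ℤ := {n : ℤ | x + P * n ∈ S}

/-- Lattice indices where both `x+Pn ∈ S` and `x+η+Pn ∈ S`. -/
def lat2 (x η : ℝ) (S : Set ℝ) : Set ℤ := {n : ℤ | x + P * n ∈ S ∧ x + η + P * n ∈ S}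

lemma ncard_Icc (a b : ℤ) : (Set.Icc a b).ncard = (b + 1 - a).toNat := by
  rw [← Finset.coe_Icc, Set.ncard_coe_finset, Int.card_Icc]

lemma ncard_Ico (a b : ℤ) : (Set.Ico a b).ncard = (b - a).toNat := by
  rw [← Finset.coe_Ico, Set.ncard_coe_finset, Int.card_Ico]

lemma ncard_Ioc (a b : ℤ) : (Set.Ioc a b).ncard = (b - a).toNat := by
  rw [← Finset.coe_Ioc, Set.ncard_coe_finset, Int.card_Ioc]

lemma ncard_Ioo (a b : ℤ) : (Set.Ioo a b).ncard = (b - a - 1).toNat := by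
  rw [← Finset.coe_Ioo, Set.ncard_coe_finset, Int.card_Ioo]

-- basic translations between real inequalities and floor/ceil on lattice index
lemma le_lat {lo x : ℝ} {n : ℤ} : lo ≤ x + P * n ↔ ⌈(lo - x) / P⌉ ≤ n := by
  rw [Int.ceil_le, div_le_iff₀ Ppos]
  constructor <;> intro h <;> linarith

lemma lat_le {hi x : ℝ} {n : ℤ} : x + P * n ≤ hi ↔ n ≤ ⌊(hi - x) / P⌋ := by
  rw [Int.le_floor, le_div_iff₀ Ppos]
  constructor <;> intro h <;> linarith

lemma lt_lat {lo x : ℝ} {n : ℤ} : lo < x + P * n ↔ ⌊(lo - x) / P⌋ < n := by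
  rw [Int.floor_lt, div_lt_iff₀ Ppos]
  constructor <;> intro h <;> linarith

lemma lat_lt {hi x : ℝ} {n : ℤ} : x + P * n < hi ↔ n < ⌈(hi - x) / P⌉ := by
  rw [Int.lt_ceil, lt_div_iff₀ Ppos]
  constructor <;> intro h <;> linarith

lemma latset_Icc (x lo hi : ℝ) :
    latset x (Set.Icc lo hi) = Set.Icc ⌈(lo - x) / P⌉ ⌊(hi - x) / P⌋ := by
  ext n; simp only [latset, mem_setOf_eq, Set.mem_Icc, le_lat, lat_le]

lemma latset_Ico (x lo hi : ℝ) :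
    latset x (Set.Ico lo hi) = Set.Ico ⌈(lo - x) / P⌉ ⌈(hi - x) / P⌉ := by
  ext n; simp only [latset, mem_setOf_eq, Set.mem_Ico, le_lat, lat_lt]

lemma latset_Ioc (x lo hi : ℝ) :
    latset x (Set.Ioc lo hi) = Set.Ioc ⌊(lo - x) / P⌋ ⌊(hi - x) / P⌋ := by
  ext n; simp only [latset, mem_setOf_eq, Set.mem_Ioc, lt_lat, lat_le]

lemma latset_Ioo (x lo hi : ℝ) :
    latset x (Set.Ioo lo hi) = Set.Ioo ⌊(lo - x) / P⌋ ⌈(hi - x) / P⌉ := by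
  ext n; simp only [latset, mem_setOf_eq, Set.mem_Ioo, lt_lat, lat_lt]

section Main

variable {I J : Set ℝ}

/-- structural facts -/
lemma Ioo_subset_of_ordconn (hne : I.Nonempty) (hbd : Bornology.IsBounded I)
    (hoc : I.OrdConnected) : Set.Ioo (sInf I) (sSup I) ⊆ I := by
  intro x hx
  obtain ⟨u, hu, hux⟩ := (csInf_lt_iff hbd.bddBelow hne).mp hx.1
  obtain ⟨v, hv, hxv⟩ := (lt_csSup_iff hbd.bddAbove hne).mp hx.2
  exact hoc.out hu hv ⟨le_of_lt hux, le_of_lt hxv⟩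

lemma subset_Icc_of_bdd (hbd : Bornology.IsBounded I) :
    I ⊆ Set.Icc (sInf I) (sSup I) := fun x hx =>
  ⟨csInf_le hbd.bddBelow hx, le_csSup hbd.bddAbove hx⟩

lemma latset_finite (hbd : Bornology.IsBounded I) (x : ℝ) : (latset x I).Finite := by
  apply Set.Finite.subset (Set.finite_Icc ⌈(sInf I - x) / P⌉ ⌊(sSup I - x) / P⌋)
  intro n hn
  have h := subset_Icc_of_bdd hbd hn
  exact ⟨le_lat.mp h.1, lat_le.mp h.2⟩

/-- Top drop: for small positive η, `lat2 x η I` is `latset x I` minus the possible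
lattice point at the supremum. -/
lemma topdrop (hne : I.Nonempty) (hbd : Bornology.IsBounded I) (hoc : I.OrdConnected)
    (x : ℝ) : ∃ ε > 0, ∀ η, 0 < η → η < ε →
      lat2 x η I = {n ∈ latset x I | x + P * n ≠ sSup I} := by
  set b := sSup I with hb
  set a := sInf I with ha
  set kstar : ℤ := ⌈(b - x) / P⌉ - 1 with hk
  have hklt : x + P * kstar < b := by
    have : (kstar : ℝ) < (b - x) / P := by
      rw [hk]; push_cast
      have := Int.ceil_lt_add_one ((b - x) / P)
      linarith
    have := (mul_lt_mul_iff_right₀ Ppos).mpr this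
    rw [mul_div_cancel₀ _ (ne_of_gt Ppos)] at this
    linarith
  refine ⟨b - (x + P * kstar), by linarith, fun η hη hηε => ?_⟩
  ext n
  simp only [lat2, latset, mem_setOf_eq, Set.mem_sep_iff]
  constructor
  · rintro ⟨h1, h2⟩
    refine ⟨h1, fun hc => ?_⟩
    have := le_csSup hbd.bddAbove h2
    rw [← hb] at this
    -- x + η + P n = b + η > b, contradiction
    nlinarith [hc ▸ this]
  · rintro ⟨h1, h2⟩
    refine ⟨h1, ?_⟩
    have hle : x + P * n ≤ b := le_csSup hbd.bddAbove h1
    have hlt : x + P * n < b := lt_of_le_of_ne hle h2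
    have hnk : n ≤ kstar := by
      have : n < ⌈(b - x) / P⌉ := lat_lt.mp hlt
      omega
    have hxn : x + P * n ≤ x + P * kstar := by
      have : (n:ℝ) ≤ kstar := by exact_mod_cast hnk
      nlinarith [Ppos]
    have hge : a ≤ x + P * n := (subset_Icc_of_bdd hbd h1).1
    apply Ioo_subset_of_ordconn hne hbd hoc
    constructor
    · rw [← ha]; linarith
    · rw [← hb]; linarith

/-- Bottom drop: for small positive η, `lat2 (x-η) η I` is `latset x I` minus the possible
lattice point at the infimum. -/
lemma botdrop (hne : I.Nonempty) (hbd : Bornology.IsBounded I) (hoc : I.OrdConnected)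
    (x : ℝ) : ∃ ε > 0, ∀ η, 0 < η → η < ε →
      lat2 (x - η) η I = {n ∈ latset x I | x + P * n ≠ sInf I} := by
  set b := sSup I with hb
  set a := sInf I with ha
  set ksharp : ℤ := ⌊(a - x) / P⌋ + 1 with hk
  have hkgt : a < x + P * ksharp := by
    have : (a - x) / P < (ksharp : ℝ) := by
      rw [hk]; push_cast
      have := Int.lt_floor_add_one ((a - x) / P)
      linarith
    have := (mul_lt_mul_iff_right₀ Ppos).mpr this
    rw [mul_div_cancel₀ _ (ne_of_gt Ppos)] at this
    linarith
  refine ⟨(x + P * ksharp) - a, by linarith, fun η hη hηε => ?_⟩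
  ext n
  simp only [lat2, latset, mem_setOf_eq, Set.mem_sep_iff]
  have hrw : ∀ m : ℤ, x - η + η + P * m = x + P * m := fun m => by ring
  constructor
  · rintro ⟨h1, h2⟩
    rw [hrw] at h2
    refine ⟨h2, fun hc => ?_⟩
    have := csInf_le hbd.bddBelow h1
    rw [← ha] at this
    nlinarith [hc ▸ this]
  · rintro ⟨h1, h2⟩
    rw [hrw]
    refine ⟨?_, h1⟩
    have hge : a ≤ x + P * n := csInf_le hbd.bddBelow h1
    have hgt : a < x + P * n := lt_of_le_of_ne hge (fun hh => h2 hh.symm)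
    have hnk : ksharp ≤ n := by
      have : ⌊(a - x) / P⌋ < n := lt_lat.mp hgt
      omega
    have hxn : x + P * ksharp ≤ x + P * n := by
      have : (ksharp:ℝ) ≤ n := by exact_mod_cast hnk
      nlinarith [Ppos]
    have hleb : x + P * n ≤ b := le_csSup hbd.bddAbove h1
    apply Ioo_subset_of_ordconn hne hbd hoc
    constructor
    · rw [← ha]; linarith
    · rw [← hb]; linarith



section Markers
variable {I J : Set ℝ}

lemma lat_inj {x : ℝ} {n m : ℤ} (h : x + P * n = x + P * m) : n = m := by
  have h2 : (n:ℝ) = m := by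
    have := Ppos
    nlinarith
  exact_mod_cast h2

/-- auxiliary: one directional marker transfer -/
lemma topmark_aux
    (hIne : I.Nonempty) (hIbd : Bornology.IsBounded I) (hIoc : I.OrdConnected)
    (hJne : J.Nonempty) (hJbd : Bornology.IsBounded J) (hJoc : J.OrdConnected)
    (h1 : ∀ x, (latset x I).ncard = (latset x J).ncard)
    (h2 : ∀ x, ∀ ε > 0, ∃ η, 0 < η ∧ η < ε ∧ (lat2 x η I).ncard = (lat2 x η J).ncard)
    (x : ℝ) (hbm : sSup I ∈ I ∧ ∃ n : ℤ, sSup I = x + P * n) :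
    sSup J ∈ J ∧ ∃ n : ℤ, sSup J = x + P * n := by
  obtain ⟨εI, hεI, hdI⟩ := topdrop hIne hIbd hIoc x
  obtain ⟨εJ, hεJ, hdJ⟩ := topdrop hJne hJbd hJoc x
  obtain ⟨η, hη0, hηm, hcard⟩ := h2 x (min εI εJ) (lt_min hεI hεJ)
  rw [hdI η hη0 (lt_of_lt_of_le hηm (min_le_left _ _)),
      hdJ η hη0 (lt_of_lt_of_le hηm (min_le_right _ _))] at hcard
  obtain ⟨hbI, n0, hn0⟩ := hbm
  have hn0mem : n0 ∈ latset x I := by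
    simp only [latset, mem_setOf_eq, ← hn0]; exact hbI
  have hIeq : {n ∈ latset x I | x + P * n ≠ sSup I} = latset x I \ {n0} := by
    ext n
    simp only [mem_sep_iff, mem_diff, mem_singleton_iff]
    constructor
    · rintro ⟨hn, hne'⟩
      exact ⟨hn, fun hc => hne' (by rw [hc, ← hn0])⟩
    · rintro ⟨hn, hne'⟩
      refine ⟨hn, fun hc => hne' (lat_inj (by rw [hc, hn0]))⟩
  by_contra hcon
  have hJeq : {n ∈ latset x J | x + P * n ≠ sSup J} = latset x J := by
    ext n
    simp only [mem_sep_iff]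
    constructor
    · exact fun h => h.1
    · intro hn
      refine ⟨hn, fun hc => hcon ⟨by rw [← hc]; exact hn, n, hc.symm⟩⟩
  rw [hIeq, hJeq, Set.ncard_diff_singleton_of_mem hn0mem, h1 x] at hcard
  have hpos : 0 < (latset x J).ncard := by
    rw [← h1 x]
    exact (Set.ncard_pos (latset_finite hIbd x)).mpr ⟨n0, hn0mem⟩
  omega

lemma botmark_aux
    (hIne : I.Nonempty) (hIbd : Bornology.IsBounded I) (hIoc : I.OrdConnected)
    (hJne : J.Nonempty) (hJbd : Bornology.IsBounded J) (hJoc : J.OrdConnected)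
    (h1 : ∀ x, (latset x I).ncard = (latset x J).ncard)
    (h3 : ∀ x, ∀ ε > 0, ∃ η, 0 < η ∧ η < ε ∧ (lat2 (x-η) η I).ncard = (lat2 (x-η) η J).ncard)
    (x : ℝ) (hbm : sInf I ∈ I ∧ ∃ n : ℤ, sInf I = x + P * n) :
    sInf J ∈ J ∧ ∃ n : ℤ, sInf J = x + P * n := by
  obtain ⟨εI, hεI, hdI⟩ := botdrop hIne hIbd hIoc x
  obtain ⟨εJ, hεJ, hdJ⟩ := botdrop hJne hJbd hJoc x
  obtain ⟨η, hη0, hηm, hcard⟩ := h3 x (min εI εJ) (lt_min hεI hεJ)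
  rw [hdI η hη0 (lt_of_lt_of_le hηm (min_le_left _ _)),
      hdJ η hη0 (lt_of_lt_of_le hηm (min_le_right _ _))] at hcard
  obtain ⟨hbI, n0, hn0⟩ := hbm
  have hn0mem : n0 ∈ latset x I := by
    simp only [latset, mem_setOf_eq, ← hn0]; exact hbI
  have hIeq : {n ∈ latset x I | x + P * n ≠ sInf I} = latset x I \ {n0} := by
    ext n
    simp only [mem_sep_iff, mem_diff, mem_singleton_iff]
    constructor
    · rintro ⟨hn, hne'⟩
      exact ⟨hn, fun hc => hne' (by rw [hc, ← hn0])⟩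
    · rintro ⟨hn, hne'⟩
      refine ⟨hn, fun hc => hne' (lat_inj (by rw [hc, hn0]))⟩
  by_contra hcon
  have hJeq : {n ∈ latset x J | x + P * n ≠ sInf J} = latset x J := by
    ext n
    simp only [mem_sep_iff]
    constructor
    · exact fun h => h.1
    · intro hn
      refine ⟨hn, fun hc => hcon ⟨by rw [← hc]; exact hn, n, hc.symm⟩⟩
  rw [hIeq, hJeq, Set.ncard_diff_singleton_of_mem hn0mem, h1 x] at hcard
  have hpos : 0 < (latset x J).ncard := by
    rw [← h1 x]
    exact (Set.ncard_pos (latset_finite hIbd x)).mpr ⟨n0, hn0mem⟩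
  omega

end Markers



section Cases

lemma div_P_int (s : ℤ) : P * (s:ℝ) / P = (s:ℝ) := by
  field_simp

lemma case_closed (a b c d : ℝ) (s t : ℤ) (hab : a ≤ b)
    (hc : c = a + P * s) (hd : d = b + P * t)
    (hcnt : (latset a (Set.Icc a b)).ncard = (latset a (Set.Icc c d)).ncard) : t = s := by
  rw [latset_Icc, latset_Icc] at hcnt
  have e1 : (a - a) / P = (0:ℝ) := by rw [sub_self, zero_div]
  have e2 : (c - a) / P = ((s:ℤ):ℝ) := by
    rw [hc, show a + P * (s:ℝ) - a = P * s by ring, div_P_int]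
  have e3 : (d - a) / P = (b - a) / P + ((t:ℤ):ℝ) := by
    rw [hd]; rw [show b + P * t - a = (b - a) + P * t by ring, add_div, div_P_int]
  rw [e1, e2, e3] at hcnt
  rw [Int.ceil_zero, Int.ceil_intCast, Int.floor_add_intCast] at hcnt
  rw [ncard_Icc, ncard_Icc] at hcnt
  have hfl : 0 ≤ ⌊(b - a) / P⌋ := Int.floor_nonneg.mpr
    (div_nonneg (by linarith) (le_of_lt Ppos))
  omega

lemma case_halfopen_le (a b c d : ℝ) (s : ℤ) (hab : a ≤ b)
    (hc : c = a + P * s)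
    (hcnt : (latset b (Set.Ico a b)).ncard = (latset b (Set.Ico c d)).ncard) :
    d ≤ b + P * s := by
  rw [latset_Ico, latset_Ico] at hcnt
  have e1 : (b - b) / P = (0:ℝ) := by rw [sub_self, zero_div]
  have e2 : (c - b) / P = (a - b) / P + ((s:ℤ):ℝ) := by
    rw [hc, show a + P * s - b = (a - b) + P * s by ring, add_div, div_P_int]
  rw [e1, e2] at hcnt
  rw [Int.ceil_zero, Int.ceil_add_intCast] at hcnt
  rw [ncard_Ico, ncard_Ico] at hcnt
  have hcl : ⌈(a - b) / P⌉ ≤ 0 := Int.ceil_le.mpr (by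
    push_cast
    exact div_nonpos_of_nonpos_of_nonneg (by linarith) (le_of_lt Ppos))
  have hkey : ⌈(d - b) / P⌉ ≤ s := by omega
  have : (d - b) / P ≤ (s:ℝ) := le_trans (Int.le_ceil _) (by exact_mod_cast hkey)
  rw [div_le_iff₀ Ppos] at this
  linarith

lemma case_ioc_le (a b c d : ℝ) (t : ℤ) (hab : a ≤ b)
    (hd : d = b + P * t)
    (hcnt : (latset a (Set.Ioc a b)).ncard = (latset a (Set.Ioc c d)).ncard) :
    a + P * t ≤ c := by
  rw [latset_Ioc, latset_Ioc] at hcnt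
  have e1 : (a - a) / P = (0:ℝ) := by rw [sub_self, zero_div]
  have e3 : (d - a) / P = (b - a) / P + ((t:ℤ):ℝ) := by
    rw [hd, show b + P * t - a = (b - a) + P * t by ring, add_div, div_P_int]
  rw [e1, e3] at hcnt
  rw [Int.floor_zero, Int.floor_add_intCast] at hcnt
  rw [ncard_Ioc, ncard_Ioc] at hcnt
  have hfl : 0 ≤ ⌊(b - a) / P⌋ := Int.floor_nonneg.mpr
    (div_nonneg (by linarith) (le_of_lt Ppos))
  have hkey : t ≤ ⌊(c - a) / P⌋ := by omega
  have : (t:ℝ) ≤ (c - a) / P := le_trans (by exact_mod_cast hkey) (Int.floor_le _)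
  rw [le_div_iff₀ Ppos] at this
  linarith

end Cases

section OpenCase

lemma ncard_lat_Ioo (x lo hi : ℝ) :
    (latset x (Set.Ioo lo hi)).ncard = (⌈(hi - x) / P⌉ + ⌈(x - lo) / P⌉ - 1).toNat := by
  rw [latset_Ioo, ncard_Ioo, show (lo - x) / P = -((x - lo) / P) by ring, Int.floor_neg]
  congr 1
  omega

lemma P_lt_P {u v : ℝ} (h : P * u < P * v) : u < v := (mul_lt_mul_iff_right₀ Ppos).mp h
lemma P_le_P {u v : ℝ} (h : P * u ≤ P * v) : u ≤ v := (mul_le_mul_iff_right₀ Ppos).mp h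

/-- the two-value property of the ceiling sum -/
lemma sum_bounds (a b x : ℝ) :
    ⌈(b - a) / P⌉ ≤ ⌈(b - x) / P⌉ + ⌈(x - a) / P⌉ ∧
      ⌈(b - x) / P⌉ + ⌈(x - a) / P⌉ ≤ ⌈(b - a) / P⌉ + 1 := by
  have hsum : (b - a) / P = (b - x) / P + (x - a) / P := by ring
  constructor
  · rw [hsum]
    refine Int.ceil_le.mpr ?_
    push_cast
    exact add_le_add (Int.le_ceil _) (Int.le_ceil _)
  · have h1 := Int.ceil_lt_add_one ((b - x) / P)
    have h2 := Int.ceil_lt_add_one ((x - a) / P)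
    have h3 : (b - a) / P ≤ ((⌈(b - a) / P⌉ : ℤ) : ℝ) := Int.le_ceil _
    have key : ((⌈(b - x) / P⌉ + ⌈(x - a) / P⌉ : ℤ) : ℝ) < ((⌈(b - a) / P⌉ + 2 : ℤ) : ℝ) := by
      push_cast
      linarith
    have := (by exact_mod_cast key : ⌈(b - x) / P⌉ + ⌈(x - a) / P⌉ < ⌈(b - a) / P⌉ + 2)
    omega

/-- characterization of the classes where the count is `m + 1`. -/
lemma sum_char (a b x : ℝ) :
    ⌈(b - x) / P⌉ + ⌈(x - a) / P⌉ = ⌈(b - a) / P⌉ + 1 ↔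
      ∃ k : ℤ, a < x + P * k ∧ x + P * k < a + ((b - a) - P * (⌈(b - a) / P⌉ - 1)) := by
  set m : ℤ := ⌈(b - a) / P⌉ with hm
  have hmle : b - a ≤ P * m := by
    have := Int.le_ceil ((b - a) / P)
    rw [← hm, div_le_iff₀ Ppos] at this
    linarith
  set w : ℝ := (x - a) / P with hwd
  set y : ℝ := (b - x) / P with hyd
  have hw : P * w = x - a := by rw [hwd]; field_simp
  have hy : P * y = b - x := by rw [hyd]; field_simp
  constructor
  · intro hS
    have h1 : (⌈w⌉ : ℝ) < w + 1 := Int.ceil_lt_add_one w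
    refine ⟨1 - ⌈w⌉, ?_, ?_⟩
    · push_cast
      nlinarith [Ppos]
    · have hceily : ⌈y⌉ = m + 1 - ⌈w⌉ := by omega
      have h2 : (⌈y⌉ : ℝ) < y + 1 := Int.ceil_lt_add_one y
      rw [hceily] at h2
      push_cast at h2 ⊢
      nlinarith [Ppos]
  · rintro ⟨k, hk1, hk2⟩
    have hq1 : 0 < w + k := by
      apply P_lt_P
      rw [mul_zero, mul_add, hw]
      linarith
    have hq2 : P * (w + k) < (b - a) - P * ((m : ℝ) - 1) := by
      rw [mul_add, hw]
      push_cast at hk2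
      linarith
    have hwk1 : w + k ≤ 1 := by
      apply P_le_P
      apply le_of_lt
      calc P * (w + k) < (b - a) - P * ((m:ℝ) - 1) := hq2
        _ ≤ P * m - P * ((m:ℝ) - 1) := by linarith
        _ = P * 1 := by ring
    have hcwk : ⌈w + (k:ℝ)⌉ = 1 := by
      rw [Int.ceil_eq_iff]
      constructor
      · push_cast; linarith
      · push_cast; linarith
    have hcw : ⌈w⌉ = 1 - k := by
      rw [show w + (k:ℝ) = w + (k:ℤ) by push_cast; ring, Int.ceil_add_intCast] at hcwk
      omega
    have hcy : ⌈y⌉ = m + k := by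
      rw [Int.ceil_eq_iff]
      have hyv : P * y = (b - a) - P * w := by rw [hy]; linarith [hw]
      constructor
      · -- (m + k : ℝ) - 1 < y
        apply P_lt_P
        rw [hyv]
        push_cast
        nlinarith [hq2]
      · apply P_le_P
        rw [hyv]
        push_cast
        nlinarith [hq1, hmle]
    rw [hwd, hyd] at *
    omega

/-- no integer strictly between 0 and 1 (scaled by the period) -/
lemma no_int_in_P {r : ℝ} (h1 : 0 < r) (h2 : r ≤ P) (k : ℤ) (ha : 0 < P * k) (hb : P * k < r) :
    False := by
  have hk0 : 0 < (k:ℝ) := by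
    by_contra hc
    push_neg at hc
    nlinarith [Ppos]
  have hk1 : (1:ℝ) ≤ (k:ℝ) := by exact_mod_cast (by exact_mod_cast hk0 : 0 < k)
  nlinarith [Ppos]

lemma P_int_neg {k : ℤ} (h : P * (k:ℝ) < 0) : P * (k:ℝ) ≤ -P := by
  have hk : (k:ℝ) < 0 := by
    by_contra hc
    push_neg at hc
    nlinarith [Ppos]
  have hkz : k < 0 := by exact_mod_cast hk
  have hk1 : (k:ℝ) ≤ -1 := by
    have hz : k ≤ -1 := by omega
    exact_mod_cast hz
  nlinarith [Ppos]

/-- Components of a periodized union of short open intervals match. -/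
lemma Tcomp (a c ρI ρJ : ℝ) (hρI0 : 0 < ρI) (hρIP : ρI ≤ P) (hρJ0 : 0 < ρJ) (hρJP : ρJ ≤ P)
    (hT : ∀ x : ℝ, (∃ k : ℤ, a < x + P * k ∧ x + P * k < a + ρI) ↔
      (∃ k : ℤ, c < x + P * k ∧ x + P * k < c + ρJ)) :
    ∃ n : ℤ, c = a + P * n ∧ ρI = ρJ := by
  have hnTA : ¬ (∃ k : ℤ, a < a + P * k ∧ a + P * k < a + ρI) := by
    rintro ⟨k, hk1, hk2⟩
    exact no_int_in_P hρI0 hρIP k (by linarith) (by linarith)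
  have hnTCa : ¬ (∃ k : ℤ, c < a + P * k ∧ a + P * k < c + ρJ) := fun h => hnTA ((hT a).mpr h)
  set n0 : ℤ := ⌈(a - c) / P⌉ with hn0
  have h1 : a ≤ c + P * n0 := by
    have : (a - c) / P ≤ ((n0:ℤ):ℝ) := Int.le_ceil _
    rw [div_le_iff₀ Ppos] at this
    linarith
  have h2 : c + P * n0 < a + P := by
    have : ((n0:ℤ):ℝ) < (a - c) / P + 1 := Int.ceil_lt_add_one _
    have h' := (mul_lt_mul_iff_right₀ Ppos).mpr this
    rw [mul_add, mul_one, mul_div_cancel₀ _ (ne_of_gt Ppos)] at h'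
    linarith
  have hceq : c + P * n0 = a := by
    rcases eq_or_lt_of_le h1 with he | hlt
    · exact he.symm
    · exfalso
      rcases lt_or_ge (c + P * n0) (a + ρI) with hlt2 | hge2
      · have hTA : ∃ k : ℤ, a < (c + P * n0) + P * k ∧ (c + P * n0) + P * k < a + ρI :=
          ⟨0, by push_cast; simpa using hlt, by push_cast; simpa using hlt2⟩
        obtain ⟨k, hk1, hk2⟩ := (hT (c + P * n0)).mp hTA
        have e : (c + P * n0) + P * k = c + P * ((n0 + k : ℤ) : ℝ) := by push_cast; ring
        rw [e] at hk1 hk2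
        exact no_int_in_P hρJ0 hρJP (n0 + k) (by linarith) (by linarith)
      · -- a + ρI ≤ c + P * n0
        have hg : c + ρJ ≤ a + P * ((1 - n0 : ℤ) : ℝ) := by
          by_contra hcon
          push_neg at hcon
          exact hnTCa ⟨1 - n0, by push_cast; linarith, hcon⟩
        set ε : ℝ := min ρI (c + P * n0 - a) / 2 with hε
        have hε0 : 0 < ε := by
          apply div_pos _ (by norm_num)
          exact lt_min hρI0 (by linarith)
        have hερ : ε < ρI := by
          have : min ρI (c + P * n0 - a) ≤ ρI := min_le_left _ _
          linarith
        have hεc : ε < c + P * n0 - a := by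
          have : min ρI (c + P * n0 - a) ≤ c + P * n0 - a := min_le_right _ _
          linarith
        have hTA : ∃ k : ℤ, a < (a + ε) + P * k ∧ (a + ε) + P * k < a + ρI :=
          ⟨0, by push_cast; linarith, by push_cast; linarith⟩
        obtain ⟨k, hk1, hk2⟩ := (hT (a + ε)).mp hTA
        have e : (a + ε) + P * k = (a + P * ((1 - n0 : ℤ):ℝ)) + ε + P * ((k + n0 - 1 : ℤ):ℝ) := by
          push_cast; ring
        rw [e] at hk1 hk2
        have hneg : P * ((k + n0 - 1 : ℤ):ℝ) < 0 := by linarith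
        have hneg2 := P_int_neg hneg
        push_cast at hk1 hneg2
        linarith
  refine ⟨-n0, by push_cast; linarith, ?_⟩
  rcases lt_trichotomy ρI ρJ with hlt | heq | hgt
  · exfalso
    have hTC : ∃ k : ℤ, c < (a + ρI) + P * k ∧ (a + ρI) + P * k < c + ρJ := by
      refine ⟨-n0, ?_, ?_⟩ <;> push_cast <;> nlinarith [hceq]
    obtain ⟨k, hk1, hk2⟩ := (hT (a + ρI)).mpr hTC
    have hneg : P * (k:ℝ) < 0 := by linarith
    have := P_int_neg hneg
    linarith
  · exact heq
  · exfalso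
    have hTA : ∃ k : ℤ, a < (a + ρJ) + P * k ∧ (a + ρJ) + P * k < a + ρI :=
      ⟨0, by push_cast; linarith, by push_cast; linarith⟩
    obtain ⟨k, hk1, hk2⟩ := (hT (a + ρJ)).mp hTA
    have e : (a + ρJ) + P * k = c + ρJ + P * ((n0 + k : ℤ):ℝ) := by push_cast; nlinarith [hceq]
    rw [e] at hk1 hk2
    have hneg : P * ((n0 + k : ℤ):ℝ) < 0 := by linarith
    have := P_int_neg hneg
    linarith

lemma case_open (a b c d : ℝ) (hab : a < b) (hcd : c < d)
    (hcnt : ∀ x, (latset x (Set.Ioo a b)).ncard = (latset x (Set.Ioo c d)).ncard) :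
    ∃ n : ℤ, c = a + P * n ∧ d = b + P * n := by
  set mI : ℤ := ⌈(b - a) / P⌉ with hmI
  set mJ : ℤ := ⌈(d - c) / P⌉ with hmJ
  have hmI1 : 1 ≤ mI := by
    rw [hmI]
    exact Int.ceil_pos.mpr (div_pos (by linarith) Ppos)
  have hmJ1 : 1 ≤ mJ := by
    rw [hmJ]
    exact Int.ceil_pos.mpr (div_pos (by linarith) Ppos)
  have hS : ∀ x, ⌈(b - x) / P⌉ + ⌈(x - a) / P⌉ = ⌈(d - x) / P⌉ + ⌈(x - c) / P⌉ := by
    intro x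
    have h := hcnt x
    rw [ncard_lat_Ioo, ncard_lat_Ioo] at h
    have hbi := sum_bounds a b x
    have hbj := sum_bounds c d x
    rw [← hmI] at hbi
    rw [← hmJ] at hbj
    omega
  have hzb : (b - b) / P = 0 := by rw [sub_self, zero_div]
  have hzd : (d - d) / P = 0 := by rw [sub_self, zero_div]
  have hSb : ⌈(d - b) / P⌉ + ⌈(b - c) / P⌉ = mI := by
    have := hS b
    rw [hzb, Int.ceil_zero] at this
    omega
  have hSd : ⌈(b - d) / P⌉ + ⌈(d - a) / P⌉ = mJ := by
    have := hS d
    rw [hzd, Int.ceil_zero] at this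
    omega
  have hmm : mI = mJ := by
    have hbj := sum_bounds c d b
    have hbi := sum_bounds a b d
    rw [← hmJ] at hbj
    rw [← hmI] at hbi
    omega
  -- the ρ values
  set ρI : ℝ := (b - a) - P * (mI - 1) with hρI
  set ρJ : ℝ := (d - c) - P * (mJ - 1) with hρJ
  have hρI0 : 0 < ρI := by
    have := Int.ceil_lt_add_one ((b - a) / P)
    rw [← hmI] at this
    have h' := (mul_lt_mul_iff_right₀ Ppos).mpr this
    rw [mul_add, mul_one, mul_div_cancel₀ _ (ne_of_gt Ppos)] at h'
    rw [hρI]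
    push_cast
    nlinarith
  have hρJ0 : 0 < ρJ := by
    have := Int.ceil_lt_add_one ((d - c) / P)
    rw [← hmJ] at this
    have h' := (mul_lt_mul_iff_right₀ Ppos).mpr this
    rw [mul_add, mul_one, mul_div_cancel₀ _ (ne_of_gt Ppos)] at h'
    rw [hρJ]
    push_cast
    nlinarith
  have hρIP : ρI ≤ P := by
    have : (b - a) / P ≤ ((mI:ℤ):ℝ) := Int.le_ceil _
    rw [div_le_iff₀ Ppos] at this
    rw [hρI]
    push_cast
    nlinarith
  have hρJP : ρJ ≤ P := by
    have : (d - c) / P ≤ ((mJ:ℤ):ℝ) := Int.le_ceil _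
    rw [div_le_iff₀ Ppos] at this
    rw [hρJ]
    push_cast
    nlinarith
  have hT : ∀ x : ℝ, (∃ k : ℤ, a < x + P * k ∧ x + P * k < a + ρI) ↔
      (∃ k : ℤ, c < x + P * k ∧ x + P * k < c + ρJ) := by
    intro x
    rw [← sum_char a b x, ← sum_char c d x, ← hmI, ← hmJ, hS x, hmm]
  obtain ⟨n, hn, hρ⟩ := Tcomp a c ρI ρJ hρI0 hρIP hρJ0 hρJP hT
  refine ⟨n, hn, ?_⟩
  have : d - c = b - a := by
    rw [hρI, hρJ, hmm] at hρ
    linarith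
  linarith

section Shapes
variable {I : Set ℝ} (hne : I.Nonempty) (hbd : Bornology.IsBounded I) (hoc : I.OrdConnected)
include hne hbd hoc

lemma I_eq_Icc (hpa : sInf I ∈ I) (hpb : sSup I ∈ I) : I = Set.Icc (sInf I) (sSup I) := by
  ext x
  constructor
  · exact fun hx => subset_Icc_of_bdd hbd hx
  · rintro ⟨hx1, hx2⟩
    rcases eq_or_lt_of_le hx1 with he | hlt1
    · rwa [← he]
    rcases eq_or_lt_of_le hx2 with he | hlt2
    · rwa [he]
    exact Ioo_subset_of_ordconn hne hbd hoc ⟨hlt1, hlt2⟩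

lemma I_eq_Ico (hpa : sInf I ∈ I) (hpb : sSup I ∉ I) : I = Set.Ico (sInf I) (sSup I) := by
  ext x
  constructor
  · intro hx
    have h := subset_Icc_of_bdd hbd hx
    exact ⟨h.1, lt_of_le_of_ne h.2 (fun he => hpb (he ▸ hx))⟩
  · rintro ⟨hx1, hx2⟩
    rcases eq_or_lt_of_le hx1 with he | hlt1
    · rwa [← he]
    exact Ioo_subset_of_ordconn hne hbd hoc ⟨hlt1, hx2⟩

lemma I_eq_Ioc (hpa : sInf I ∉ I) (hpb : sSup I ∈ I) : I = Set.Ioc (sInf I) (sSup I) := by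
  ext x
  constructor
  · intro hx
    have h := subset_Icc_of_bdd hbd hx
    exact ⟨lt_of_le_of_ne h.1 (fun he => hpa (he ▸ hx)), h.2⟩
  · rintro ⟨hx1, hx2⟩
    rcases eq_or_lt_of_le hx2 with he | hlt2
    · rwa [he]
    exact Ioo_subset_of_ordconn hne hbd hoc ⟨hx1, hlt2⟩

lemma I_eq_Ioo (hpa : sInf I ∉ I) (hpb : sSup I ∉ I) : I = Set.Ioo (sInf I) (sSup I) := by
  ext x
  constructor
  · intro hx
    have h := subset_Icc_of_bdd hbd hx
    exact ⟨lt_of_le_of_ne h.1 (fun he => hpa (he ▸ hx)),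
      lt_of_le_of_ne h.2 (fun he => hpb (he ▸ hx))⟩
  · exact fun hx => Ioo_subset_of_ordconn hne hbd hoc hx

lemma inf_lt_sup_of_not_mem (hpa : sInf I ∉ I) : sInf I < sSup I := by
  obtain ⟨x0, hx0⟩ := hne
  have h := subset_Icc_of_bdd hbd hx0
  rcases eq_or_lt_of_le (le_trans h.1 h.2) with he | hlt
  · exfalso
    apply hpa
    have : x0 = sInf I := le_antisymm (by rw [he]; exact h.2) h.1
    rwa [← this]
  · exact hlt

lemma inf_lt_sup_of_not_mem' (hpb : sSup I ∉ I) : sInf I < sSup I := by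
  obtain ⟨x0, hx0⟩ := hne
  have h := subset_Icc_of_bdd hbd hx0
  rcases eq_or_lt_of_le (le_trans h.1 h.2) with he | hlt
  · exfalso
    apply hpb
    have : x0 = sSup I := le_antisymm h.2 (by rw [← he]; exact h.1)
    rwa [← this]
  · exact hlt

lemma inf_le_sup' : sInf I ≤ sSup I := by
  obtain ⟨x0, hx0⟩ := hne
  have h := subset_Icc_of_bdd hbd hx0
  exact le_trans h.1 h.2

end Shapes

theorem main_arith (I J : Set ℝ)
    (hIne : I.Nonempty) (hIbd : Bornology.IsBounded I) (hIoc : I.OrdConnected)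
    (hJne : J.Nonempty) (hJbd : Bornology.IsBounded J) (hJoc : J.OrdConnected)
    (h1 : ∀ x, (latset x I).ncard = (latset x J).ncard)
    (h2 : ∀ x, ∀ ε > 0, ∃ η, 0 < η ∧ η < ε ∧ (lat2 x η I).ncard = (lat2 x η J).ncard)
    (h3 : ∀ x, ∀ ε > 0, ∃ η, 0 < η ∧ η < ε ∧
      (lat2 (x - η) η I).ncard = (lat2 (x - η) η J).ncard) :
    ∃ n : ℤ, ∀ x, x ∈ I ↔ x + P * n ∈ J := by
  have h1' : ∀ x, (latset x J).ncard = (latset x I).ncard := fun x => (h1 x).symm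
  have h2' : ∀ x, ∀ ε > 0, ∃ η, 0 < η ∧ η < ε ∧ (lat2 x η J).ncard = (lat2 x η I).ncard := by
    intro x ε hε
    obtain ⟨η, ha, hb, hc⟩ := h2 x ε hε
    exact ⟨η, ha, hb, hc.symm⟩
  have h3' : ∀ x, ∀ ε > 0, ∃ η, 0 < η ∧ η < ε ∧
      (lat2 (x - η) η J).ncard = (lat2 (x - η) η I).ncard := by
    intro x ε hε
    obtain ⟨η, ha, hb, hc⟩ := h3 x ε hε
    exact ⟨η, ha, hb, hc.symm⟩
  have hab : sInf I ≤ sSup I := inf_le_sup' hIne hIbd hIoc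
  have hcd : sInf J ≤ sSup J := inf_le_sup' hJne hJbd hJoc
  by_cases hpa : sInf I ∈ I <;> by_cases hpb : sSup I ∈ I
  · -- closed case
    obtain ⟨hpc, s, hs⟩ := botmark_aux hIne hIbd hIoc hJne hJbd hJoc h1 h3 (sInf I)
      ⟨hpa, 0, by push_cast; ring⟩
    obtain ⟨hpd, t, ht⟩ := topmark_aux hIne hIbd hIoc hJne hJbd hJoc h1 h2 (sSup I)
      ⟨hpb, 0, by push_cast; ring⟩
    have hIe := I_eq_Icc hIne hIbd hIoc hpa hpb
    have hJe := I_eq_Icc hJne hJbd hJoc hpc hpd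
    have hts : t = s := case_closed (sInf I) (sSup I) (sInf J) (sSup J) s t hab hs ht
      (by rw [← hIe, ← hJe]; exact h1 (sInf I))
    refine ⟨s, fun x => ?_⟩
    rw [hIe, hJe, hs, ht, hts]
    simp only [Set.mem_Icc]
    constructor <;> intro h <;> constructor <;> linarith [h.1, h.2]
  · -- Ico case
    obtain ⟨hpc, s, hs⟩ := botmark_aux hIne hIbd hIoc hJne hJbd hJoc h1 h3 (sInf I)
      ⟨hpa, 0, by push_cast; ring⟩
    have hpd : sSup J ∉ J := fun hpd =>
      hpb (topmark_aux hJne hJbd hJoc hIne hIbd hIoc h1' h2' (sSup J)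
        ⟨hpd, 0, by push_cast; ring⟩).1
    have hIe := I_eq_Ico hIne hIbd hIoc hpa hpb
    have hJe := I_eq_Ico hJne hJbd hJoc hpc hpd
    have d1 : sSup J ≤ sSup I + P * s :=
      case_halfopen_le (sInf I) (sSup I) (sInf J) (sSup J) s hab hs
        (by rw [← hIe, ← hJe]; exact h1 (sSup I))
    have d2 : sSup I ≤ sSup J + P * ((-s : ℤ) : ℝ) :=
      case_halfopen_le (sInf J) (sSup J) (sInf I) (sSup I) (-s) hcd
        (by push_cast; linarith [hs]) (by rw [← hIe, ← hJe]; exact (h1 (sSup J)).symm)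
    push_cast at d2
    have hd : sSup J = sSup I + P * s := by linarith
    refine ⟨s, fun x => ?_⟩
    rw [hIe, hJe, hs, hd]
    simp only [Set.mem_Ico]
    constructor <;> intro h <;> constructor <;> linarith [h.1, h.2]
  · -- Ioc case
    obtain ⟨hpd, t, ht⟩ := topmark_aux hIne hIbd hIoc hJne hJbd hJoc h1 h2 (sSup I)
      ⟨hpb, 0, by push_cast; ring⟩
    have hpc : sInf J ∉ J := fun hpc =>
      hpa (botmark_aux hJne hJbd hJoc hIne hIbd hIoc h1' h3' (sInf J)
        ⟨hpc, 0, by push_cast; ring⟩).1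
    have hIe := I_eq_Ioc hIne hIbd hIoc hpa hpb
    have hJe := I_eq_Ioc hJne hJbd hJoc hpc hpd
    have e1 : sInf I + P * t ≤ sInf J :=
      case_ioc_le (sInf I) (sSup I) (sInf J) (sSup J) t hab ht
        (by rw [← hIe, ← hJe]; exact h1 (sInf I))
    have e2 : sInf J + P * ((-t : ℤ) : ℝ) ≤ sInf I :=
      case_ioc_le (sInf J) (sSup J) (sInf I) (sSup I) (-t) hcd
        (by push_cast; linarith [ht]) (by rw [← hIe, ← hJe]; exact (h1 (sInf J)).symm)
    push_cast at e2
    have hc : sInf J = sInf I + P * t := by linarith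
    refine ⟨t, fun x => ?_⟩
    rw [hIe, hJe, hc, ht]
    simp only [Set.mem_Ioc]
    constructor <;> intro h <;> constructor <;> linarith [h.1, h.2]
  · -- open case
    have hab' : sInf I < sSup I := inf_lt_sup_of_not_mem hIne hIbd hIoc hpa
    have hpc : sInf J ∉ J := fun hpc =>
      hpa (botmark_aux hJne hJbd hJoc hIne hIbd hIoc h1' h3' (sInf J)
        ⟨hpc, 0, by push_cast; ring⟩).1
    have hpd : sSup J ∉ J := fun hpd =>
      hpb (topmark_aux hJne hJbd hJoc hIne hIbd hIoc h1' h2' (sSup J)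
        ⟨hpd, 0, by push_cast; ring⟩).1
    have hcd' : sInf J < sSup J := inf_lt_sup_of_not_mem hJne hJbd hJoc hpc
    have hIe := I_eq_Ioo hIne hIbd hIoc hpa hpb
    have hJe := I_eq_Ioo hJne hJbd hJoc hpc hpd
    obtain ⟨n, hcn, hdn⟩ := case_open (sInf I) (sSup I) (sInf J) (sSup J) hab' hcd'
      (fun x => by rw [← hIe, ← hJe]; exact h1 x)
    refine ⟨n, fun x => ?_⟩
    rw [hIe, hJe, hcn, hdn]
    simp only [Set.mem_Ioo]
    constructor <;> intro h <;> constructor <;> linarith [h.1, h.2]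

lemma bijOn_of_iff {I J : Set ℝ} (r : ℝ) (h : ∀ x, x ∈ I ↔ x + r ∈ J) :
    Set.BijOn (fun x => x + r) I J := by
  refine ⟨fun x hx => (h x).mp hx, fun x _ y _ hxy => by dsimp at hxy; linarith, ?_⟩
  intro y hy
  exact ⟨y - r, (h (y - r)).mpr (by simpa), by dsimp; ring⟩
/-! ## Auxiliary lemmas for Statement 0 -/

namespace AtR

variable {Q : AtR}

lemma alpha_add_period (j : ℤ) : Q.α (j + (Q.periodN : ℤ)) = Q.α j + 2 * Real.pi := by
  unfold periodN
  split_ifs with hm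
  · rw [Q.cyc hm, Q.cyc hm]
    push_cast
    ring
  · have h := Q.per hm j
    rw [show ((2 * Q.m : ℕ) : ℤ) = 2 * (Q.m : ℤ) by push_cast; ring]
    exact h

lemma alpha_add_period_mul (j : ℤ) (T : ℕ) :
    Q.α (j + (Q.periodN : ℤ) * T) = Q.α j + 2 * Real.pi * T := by
  induction T with
  | zero => simp
  | succ T ih =>
    have e : j + (Q.periodN : ℤ) * ((T + 1 : ℕ) : ℤ) = (j + (Q.periodN : ℤ) * T) + (Q.periodN : ℤ) := by
      push_cast; ring
    rw [e, alpha_add_period, ih]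
    push_cast
    ring

lemma exists_le_alpha (x : ℝ) : ∃ j : ℤ, Q.α j ≤ x := by
  obtain ⟨T, hT⟩ := exists_nat_ge ((Q.α 0 - x) / (2 * Real.pi))
  refine ⟨0 - (Q.periodN : ℤ) * T, ?_⟩
  have h := alpha_add_period_mul (Q := Q) (0 - (Q.periodN : ℤ) * T) T
  have e : (0 - (Q.periodN : ℤ) * T) + (Q.periodN : ℤ) * T = 0 := by ring
  rw [e] at h
  have hpi : (0:ℝ) < 2 * Real.pi := by positivity
  rw [div_le_iff₀ hpi] at hT
  linarith [h]

lemma bdd_le_alpha (x : ℝ) : ∃ m : ℤ, ∀ j : ℤ, Q.α j ≤ x → j ≤ m := by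
  obtain ⟨T, hT⟩ := exists_nat_gt ((x - Q.α 0) / (2 * Real.pi))
  refine ⟨(Q.periodN : ℤ) * T, fun j hj => ?_⟩
  by_contra hc
  push_neg at hc
  have h := alpha_add_period_mul (Q := Q) 0 T
  rw [zero_add] at h
  have hmono := Q.mono.monotone (le_of_lt hc)
  have hpi : (0:ℝ) < 2 * Real.pi := by positivity
  rw [div_lt_iff₀ hpi] at hT
  linarith [h ▸ hmono]

/-- every real lies in an arc, with room above -/
lemma exists_arc (x : ℝ) : ∃ j : ℤ, Q.α j ≤ x ∧ x < Q.α (j + 1) := by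
  obtain ⟨j0, hj0, hmax⟩ := Int.exists_greatest_of_bdd (bdd_le_alpha (Q := Q) x)
    (exists_le_alpha (Q := Q) x)
  refine ⟨j0, hj0, ?_⟩
  by_contra hc
  push_neg at hc
  have := hmax (j0 + 1) hc
  omega

/-- every real lies in an arc, with room below -/
lemma exists_arc' (x : ℝ) : ∃ j : ℤ, Q.α j < x ∧ x ≤ Q.α (j + 1) := by
  have hbdd : ∃ m : ℤ, ∀ j : ℤ, Q.α j < x → j ≤ m := by
    obtain ⟨m, hm⟩ := bdd_le_alpha (Q := Q) x
    exact ⟨m, fun j hj => hm j (le_of_lt hj)⟩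
  have hinh : ∃ j : ℤ, Q.α j < x := by
    obtain ⟨j, hj⟩ := exists_le_alpha (Q := Q) (x - 1)
    exact ⟨j, by linarith⟩
  obtain ⟨j0, hj0, hmax⟩ := Int.exists_greatest_of_bdd hbdd hinh
  refine ⟨j0, hj0, ?_⟩
  by_contra hc
  push_neg at hc
  have := hmax (j0 + 1) hc
  omega

/-- within an arc, any two ordered points are related one way or the other -/
lemma pair_rel {u v : ℝ} (j : ℤ) (hu : Q.α j ≤ u) (huv : u ≤ v) (hv : v ≤ Q.α (j + 1)) :
    Q.covRel u v ∨ Q.covRel v u := by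
  unfold covRel
  split_ifs with hm
  · left; exact huv
  · rcases Int.even_or_odd j with he | ho
    · right
      exact ⟨j, ⟨le_trans hu huv, hv⟩, ⟨hu, le_trans huv hv⟩, Or.inl ⟨he, huv⟩⟩
    · left
      exact ⟨j, ⟨hu, le_trans huv hv⟩, ⟨le_trans hu huv, hv⟩,
        Or.inr ⟨Int.not_even_iff_odd.mpr ho, huv⟩⟩

end AtR

/-! ## Counting and ranks for bars -/

section BarCount

variable {k : Type} [Field k]

lemma two_pi_lcancel {s t : ℝ} (h : 2 * Real.pi * s = 2 * Real.pi * t) : s = t :=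
  mul_left_cancel₀ (by positivity) h

/-- the canonical equivalence between the bar basis at `x` and the lattice hits. -/
def barIdxLatEquiv (I : Set ℝ) (x : ℝ) : barIdx I x ≃ (latset x I) where
  toFun b := ⟨Classical.choose b.2.2, by
    have hspec := Classical.choose_spec b.2.2
    show x + 2 * Real.pi * (Classical.choose b.2.2 : ℤ) ∈ I
    rw [← hspec]
    exact b.2.1⟩
  invFun n := ⟨x + 2 * Real.pi * (n : ℤ), n.2, n.1, rfl⟩
  left_inv b := by
    apply Subtype.ext
    exact (Classical.choose_spec b.2.2).symm
  right_inv n := by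
    apply Subtype.ext
    have hspec : x + 2 * Real.pi * ((n : ℤ) : ℝ) = x + 2 * Real.pi *
        ((Classical.choose ((⟨x + 2 * Real.pi * (n : ℤ), n.2, n.1, rfl⟩ :
          barIdx I x)).2.2 : ℤ) : ℝ) := Classical.choose_spec
      ((⟨x + 2 * Real.pi * (n : ℤ), n.2, n.1, rfl⟩ : barIdx I x)).2.2
    have h2 := two_pi_lcancel (by linarith [hspec] :
      2 * Real.pi * ((Classical.choose ((⟨x + 2 * Real.pi * (n : ℤ), n.2, n.1, rfl⟩ :
        barIdx I x)).2.2 : ℤ) : ℝ) = 2 * Real.pi * ((n : ℤ) : ℝ))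
    exact_mod_cast h2

lemma barIdx_finite (I : Set ℝ) (hbd : Bornology.IsBounded I) (x : ℝ) :
    Finite (barIdx I x) := by
  have := (latset_finite hbd x).to_subtype
  exact Finite.of_equiv _ (barIdxLatEquiv I x).symm

lemma natcard_barIdx (I : Set ℝ) (x : ℝ) :
    Nat.card (barIdx I x) = (latset x I).ncard := by
  rw [Nat.card_congr (barIdxLatEquiv I x), Nat.card_coe_set_eq]

lemma finrank_barSpace (I : Set ℝ) (hbd : Bornology.IsBounded I) (x : ℝ) :
    Module.finrank k (barIdx I x →₀ k) = (latset x I).ncard := by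
  haveI := barIdx_finite I hbd x
  haveI : Fintype (barIdx I x) := Fintype.ofFinite _
  rw [Module.finrank_finsupp_self, ← Nat.card_eq_fintype_card, natcard_barIdx]

/-- the range of the bar structure map is spanned by the surviving basis vectors -/
lemma range_barMapHom (I : Set ℝ) (u v : ℝ) :
    LinearMap.range (barMapHom k I u v) = Submodule.span k
      ((fun γ : barIdx I v => Finsupp.single γ (1:k)) ''
        {γ : barIdx I v | γ.1 - v + u ∈ I}) := by
  classical
  unfold barMapHom
  rw [Finsupp.range_linearCombination]
  apply le_antisymm
  · rw [Submodule.span_le]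
    rintro y ⟨β, rfl⟩
    dsimp only
    by_cases h : β.1 - u + v ∈ I
    · rw [dif_pos h]
      apply Submodule.subset_span
      refine ⟨⟨β.1 - u + v, h, ?_⟩, ?_, rfl⟩
      · obtain ⟨n, hn⟩ := β.2.2
        exact ⟨n, by rw [hn]; ring⟩
      · show β.1 - u + v - v + u ∈ I
        have he : β.1 - u + v - v + u = β.1 := by ring
        rw [he]
        exact β.2.1
    · rw [dif_neg h]
      exact Submodule.zero_mem _
  · rw [Submodule.span_le]
    rintro y ⟨γ, hγ, rfl⟩
    apply Submodule.subset_span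
    have hclass : ∃ n : ℤ, γ.1 - v + u = u + 2 * Real.pi * n := by
      obtain ⟨n, hn⟩ := γ.2.2
      exact ⟨n, by rw [hn]; ring⟩
    refine ⟨⟨γ.1 - v + u, hγ, hclass⟩, ?_⟩
    dsimp only
    have hcond : γ.1 - v + u - u + v ∈ I := by
      have he : γ.1 - v + u - u + v = γ.1 := by ring
      rw [he]
      exact γ.2.1
    rw [dif_pos hcond]
    congr 1
    apply Subtype.ext
    show γ.1 - v + u - u + v = γ.1
    ring

/-- the equivalence between surviving basis vectors and lattice double hits -/
def TsetEquiv (I : Set ℝ) (u v : ℝ) :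
    ({γ : barIdx I v | γ.1 - v + u ∈ I} : Set (barIdx I v)) ≃
      ({n : ℤ | u + 2 * Real.pi * n ∈ I ∧ v + 2 * Real.pi * n ∈ I} : Set ℤ) where
  toFun γ := by
    refine ⟨Classical.choose γ.1.2.2, ?_, ?_⟩
    · have hspec : γ.1.1 = v + 2 * Real.pi * (Classical.choose γ.1.2.2 : ℤ) :=
        Classical.choose_spec γ.1.2.2
      have hmem : γ.1.1 - v + u ∈ I := γ.2
      have he : u + 2 * Real.pi * ((Classical.choose γ.1.2.2 : ℤ) : ℝ) = γ.1.1 - v + u := by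
        linarith [hspec]
      exact Set.mem_of_eq_of_mem he hmem
    · have hspec : γ.1.1 = v + 2 * Real.pi * (Classical.choose γ.1.2.2 : ℤ) :=
        Classical.choose_spec γ.1.2.2
      show v + 2 * Real.pi * ((Classical.choose γ.1.2.2 : ℤ) : ℝ) ∈ I
      rw [← hspec]
      exact γ.1.2.1
  invFun n := by
    refine ⟨⟨v + 2 * Real.pi * (n : ℤ), n.2.2, n.1, rfl⟩, ?_⟩
    show v + 2 * Real.pi * ((n : ℤ) : ℝ) - v + u ∈ I
    have he : v + 2 * Real.pi * ((n : ℤ) : ℝ) - v + u = u + 2 * Real.pi * (n : ℤ) := by ring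
    rw [he]
    exact n.2.1
  left_inv γ := by
    apply Subtype.ext
    apply Subtype.ext
    exact (Classical.choose_spec γ.1.2.2).symm
  right_inv n := by
    apply Subtype.ext
    have hspec : v + 2 * Real.pi * ((n : ℤ) : ℝ) = v + 2 * Real.pi *
        ((Classical.choose ((⟨v + 2 * Real.pi * (n : ℤ), n.2.2, n.1, rfl⟩ :
          barIdx I v)).2.2 : ℤ) : ℝ) := Classical.choose_spec
      ((⟨v + 2 * Real.pi * (n : ℤ), n.2.2, n.1, rfl⟩ : barIdx I v)).2.2
    have h2 := two_pi_lcancel (by linarith [hspec] :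
      2 * Real.pi * ((Classical.choose ((⟨v + 2 * Real.pi * (n : ℤ), n.2.2, n.1, rfl⟩ :
        barIdx I v)).2.2 : ℤ) : ℝ) = 2 * Real.pi * ((n : ℤ) : ℝ))
    exact_mod_cast h2

lemma finrank_range_barMapHom (I : Set ℝ) (hbd : Bornology.IsBounded I) (u v : ℝ) :
    Module.finrank k (LinearMap.range (barMapHom k I u v)) =
      ({n : ℤ | u + 2 * Real.pi * n ∈ I ∧ v + 2 * Real.pi * n ∈ I} : Set ℤ).ncard := by
  rw [range_barMapHom]
  haveI := barIdx_finite I hbd v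
  haveI : Fintype (barIdx I v) := Fintype.ofFinite _
  set Tset : Set (barIdx I v) := {γ : barIdx I v | γ.1 - v + u ∈ I} with hT
  set s : Set (barIdx I v →₀ k) := (fun γ : barIdx I v => Finsupp.single γ (1:k)) '' Tset with hs
  have hsingle_inj : Function.Injective (fun γ : barIdx I v => Finsupp.single γ (1:k)) :=
    Finsupp.single_left_injective one_ne_zero
  haveI : Fintype s := Fintype.ofFinite _
  have hli : LinearIndependent k ((↑) : s → (barIdx I v →₀ k)) := by
    have hbase : LinearIndependent k (fun γ : barIdx I v => Finsupp.single γ (1:k)) := by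
      have := (Finsupp.basisSingleOne (ι := barIdx I v) (R := k)).linearIndependent
      rwa [Finsupp.coe_basisSingleOne] at this
    have hcomp := hbase.comp ((↑) : Tset → barIdx I v) Subtype.val_injective
    exact hcomp.linearIndepOn_id' (by rw [hs, Set.image_eq_range]; rfl)
  rw [finrank_span_set_eq_card hli, ← Set.ncard_eq_toFinset_card', hs,
    Set.ncard_image_of_injective _ hsingle_inj, ← Nat.card_coe_set_eq,
    Nat.card_congr (TsetEquiv I u v), Nat.card_coe_set_eq]

/-- rank transfer along intertwined equivalences -/
lemma finrank_range_eq_of_intertwine {M₁ M₂ N₁ N₂ : Type} [AddCommGroup M₁] [AddCommGroup M₂]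
    [AddCommGroup N₁] [AddCommGroup N₂] [Module k M₁] [Module k M₂] [Module k N₁] [Module k N₂]
    (f : M₁ →ₗ[k] M₂) (g : N₁ →ₗ[k] N₂) (e₁ : M₁ ≃ₗ[k] N₁) (e₂ : M₂ ≃ₗ[k] N₂)
    (h : ∀ y, e₂ (f y) = g (e₁ y)) :
    Module.finrank k (LinearMap.range f) = Module.finrank k (LinearMap.range g) := by
  have hg : g = (e₂ : M₂ →ₗ[k] N₂) ∘ₗ f ∘ₗ (e₁.symm : N₁ →ₗ[k] M₁) := by
    apply LinearMap.ext
    intro y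
    simp only [LinearMap.comp_apply, LinearEquiv.coe_coe]
    rw [h (e₁.symm y), LinearEquiv.apply_symm_apply]
  rw [hg, ← LinearMap.comp_assoc, LinearMap.range_comp_of_range_eq_top _ e₁.symm.range,
    LinearMap.range_comp]
  exact (LinearEquiv.finrank_map_eq e₂ _).symm

end BarCount

/-! ## The translation isomorphism -/

section Translate

variable {k : Type} [Field k]

/-- translation of the bar index sets -/
def barShiftEquiv (I J : Set ℝ) (n : ℤ) (hmem : ∀ β : ℝ, β ∈ I ↔ β + 2 * Real.pi * n ∈ J)
    (θ : ℝ) : barIdx I θ ≃ barIdx J θ where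
  toFun b := ⟨b.1 + 2 * Real.pi * n, (hmem b.1).mp b.2.1, by
    obtain ⟨m, hm⟩ := b.2.2
    exact ⟨m + n, by rw [hm]; push_cast; ring⟩⟩
  invFun b := ⟨b.1 - 2 * Real.pi * n, (hmem (b.1 - 2 * Real.pi * n)).mpr (by
      rw [sub_add_cancel]; exact b.2.1), by
    obtain ⟨m, hm⟩ := b.2.2
    exact ⟨m - n, by rw [hm]; push_cast; ring⟩⟩
  left_inv b := by apply Subtype.ext; show b.1 + 2 * Real.pi * n - 2 * Real.pi * n = b.1; ring
  right_inv b := by apply Subtype.ext; show b.1 - 2 * Real.pi * n + 2 * Real.pi * n = b.1; ring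

lemma barMapHom_shift (I J : Set ℝ) (n : ℤ)
    (hmem : ∀ β : ℝ, β ∈ I ↔ β + 2 * Real.pi * n ∈ J) (θ φ : ℝ) (y : barIdx I θ →₀ k) :
    (Finsupp.domLCongr (barShiftEquiv I J n hmem φ) : (barIdx I φ →₀ k) ≃ₗ[k] _)
        (barMapHom k I θ φ y)
      = barMapHom k J θ φ
        ((Finsupp.domLCongr (barShiftEquiv I J n hmem θ) : (barIdx I θ →₀ k) ≃ₗ[k] _) y) := by
  have hmaps : ((Finsupp.domLCongr (barShiftEquiv I J n hmem φ) :
        (barIdx I φ →₀ k) ≃ₗ[k] _).toLinearMap) ∘ₗ barMapHom k I θ φ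
      = barMapHom k J θ φ ∘ₗ ((Finsupp.domLCongr (barShiftEquiv I J n hmem θ) :
        (barIdx I θ →₀ k) ≃ₗ[k] _).toLinearMap) := by
    apply Finsupp.lhom_ext
    intro β c
    simp only [LinearMap.comp_apply, LinearEquiv.coe_coe]
    classical
    unfold barMapHom
    rw [Finsupp.domLCongr_single, Finsupp.linearCombination_single,
      Finsupp.linearCombination_single, map_smul]
    congr 1
    by_cases h : β.1 - θ + φ ∈ I
    · rw [dif_pos h]
      have h' : ((barShiftEquiv I J n hmem θ) β).1 - θ + φ ∈ J := by
        show β.1 + 2 * Real.pi * n - θ + φ ∈ J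
        have he : β.1 + 2 * Real.pi * n - θ + φ = (β.1 - θ + φ) + 2 * Real.pi * n := by ring
        rw [he]
        exact (hmem _).mp h
      rw [dif_pos h']
      refine (Finsupp.domLCongr_single _ _ _).trans ?_
      congr 1
      apply Subtype.ext
      show β.1 - θ + φ + 2 * Real.pi * n = β.1 + 2 * Real.pi * n - θ + φ
      ring
    · rw [dif_neg h]
      have h' : ¬ (((barShiftEquiv I J n hmem θ) β).1 - θ + φ ∈ J) := by
        show ¬ (β.1 + 2 * Real.pi * n - θ + φ ∈ J)
        intro hc
        apply h
        apply (hmem _).mpr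
        have he : (β.1 - θ + φ) + 2 * Real.pi * n = β.1 + 2 * Real.pi * n - θ + φ := by ring
        rw [he]
        exact hc
      rw [dif_neg h']
      simp
  exact LinearMap.congr_fun hmaps y

lemma barShift_trans (I J : Set ℝ) (n : ℤ)
    (hmem : ∀ β : ℝ, β ∈ I ↔ β + 2 * Real.pi * n ∈ J) (θ : ℝ) :
    (barShift I θ).trans (barShiftEquiv I J n hmem θ)
      = (barShiftEquiv I J n hmem (θ + 2 * Real.pi)).trans (barShift J θ) := by
  apply Equiv.ext
  intro b
  apply Subtype.ext
  rfl

end Translate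
/-! ## Statement 0 -/

section FinalHelpers

variable {k : Type} [Field k]

lemma domLCongr_eq_equivMapDomain {ι κ : Type} (e : ι ≃ κ) (x : ι →₀ k) :
    (Finsupp.domLCongr e : (ι →₀ k) ≃ₗ[k] (κ →₀ k)) x = Finsupp.equivMapDomain e x := by
  simp [Finsupp.domLCongr_apply, Finsupp.domCongr_apply]

end FinalHelpers

/-- Two bars `V ≅ M_I` and `W ≅ M_J` are isomorphic if and only if `J` is the
translate of `I` by an integer multiple of `2π`. -/
theorem bar_iso_iff {k : Type} [Field k] {Q : AtR} (V W : SRep k Q) (I J : Set ℝ)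
    (hV : SRep.BarOn I V) (hW : SRep.BarOn J W) :
    SRep.RepIso V W ↔ ∃ n : ℤ, Set.BijOn (fun x => x + 2 * Real.pi * n) I J := by
  obtain ⟨hIne, hIbd, hIoc, eV, hV1, hV2⟩ := hV
  obtain ⟨hJne, hJbd, hJoc, eW, hW1, hW2⟩ := hW
  constructor
  · rintro ⟨f, hf1, hf2⟩
    set E : ∀ θ : ℝ, (barIdx I θ →₀ k) ≃ₗ[k] (barIdx J θ →₀ k) :=
      fun θ => ((eV θ).symm.trans (f θ)).trans (eW θ) with hEdef
    have hE : ∀ {θ φ : ℝ} (h : Q.covRel θ φ) (y : barIdx I θ →₀ k),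
        E φ (barMapHom k I θ φ y) = barMapHom k J θ φ (E θ y) := by
      intro θ φ h y
      have h1 : barMapHom k I θ φ y = eV φ (V.map h ((eV θ).symm y)) := by
        rw [hV1 h ((eV θ).symm y), LinearEquiv.apply_symm_apply]
      have h2 : E φ (barMapHom k I θ φ y) = eW φ (f φ (V.map h ((eV θ).symm y))) := by
        rw [h1]
        simp only [hEdef, LinearEquiv.trans_apply, LinearEquiv.symm_apply_apply]
      rw [h2, hf1 h ((eV θ).symm y), hW1 h (f θ ((eV θ).symm y))]
      congr 1
    have hcnt : ∀ x : ℝ, (latset x I).ncard = (latset x J).ncard := by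
      intro x
      have h := (E x).finrank_eq
      rwa [finrank_barSpace I hIbd x, finrank_barSpace J hJbd x] at h
    have hrank : ∀ u v : ℝ, Q.covRel u v →
        ({n : ℤ | u + 2*Real.pi*n ∈ I ∧ v + 2*Real.pi*n ∈ I} : Set ℤ).ncard
          = ({n : ℤ | u + 2*Real.pi*n ∈ J ∧ v + 2*Real.pi*n ∈ J} : Set ℤ).ncard := by
      intro u v h
      have hr := finrank_range_eq_of_intertwine (barMapHom k I u v) (barMapHom k J u v)
        (E u) (E v) (fun y => hE h y)
      rwa [finrank_range_barMapHom I hIbd u v, finrank_range_barMapHom J hJbd u v] at hr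
    have hlat2 : ∀ x : ℝ, ∀ ε > 0, ∃ η, 0 < η ∧ η < ε ∧
        (lat2 x η I).ncard = (lat2 x η J).ncard := by
      intro x ε hε
      obtain ⟨j, hj1, hj2⟩ := AtR.exists_arc (Q := Q) x
      have key : ∀ η', 0 < η' → x + η' ≤ Q.α (j+1) →
          (lat2 x η' I).ncard = (lat2 x η' J).ncard := by
        intro η' hη'0 hη'le
        rcases AtR.pair_rel (Q := Q) j hj1 (by linarith : x ≤ x + η') hη'le with hcov | hcov
        · exact hrank x (x + η') hcov
        · have e2 : ∀ S : Set ℝ, lat2 x η' S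
              = {m : ℤ | (x + η') + 2*Real.pi*(m:ℤ) ∈ S ∧ x + 2*Real.pi*(m:ℤ) ∈ S} := by
            intro S
            ext m
            exact and_comm
          rw [e2 I, e2 J]
          exact hrank (x + η') x hcov
      refine ⟨min (ε/2) ((Q.α (j+1) - x)/2), lt_min (by linarith) (by linarith),
        lt_of_le_of_lt (min_le_left _ _) (by linarith), ?_⟩
      apply key _ (lt_min (by linarith) (by linarith))
      have := min_le_right (ε/2) ((Q.α (j+1) - x)/2)
      linarith
    have hlat2' : ∀ x : ℝ, ∀ ε > 0, ∃ η, 0 < η ∧ η < ε ∧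
        (lat2 (x - η) η I).ncard = (lat2 (x - η) η J).ncard := by
      intro x ε hε
      obtain ⟨j, hj1, hj2⟩ := AtR.exists_arc' (Q := Q) x
      have key : ∀ η', 0 < η' → Q.α j ≤ x - η' →
          (lat2 (x - η') η' I).ncard = (lat2 (x - η') η' J).ncard := by
        intro η' hη'0 hη'le
        have e2 : ∀ S : Set ℝ, lat2 (x - η') η' S
            = {m : ℤ | (x - η') + 2*Real.pi*(m:ℤ) ∈ S ∧ x + 2*Real.pi*(m:ℤ) ∈ S} := by
          intro S
          ext m
          simp only [lat2, Set.mem_setOf_eq, sub_add_cancel]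
        have e3 : ∀ S : Set ℝ, lat2 (x - η') η' S
            = {m : ℤ | x + 2*Real.pi*(m:ℤ) ∈ S ∧ (x - η') + 2*Real.pi*(m:ℤ) ∈ S} := by
          intro S
          rw [e2 S]
          ext m
          exact and_comm
        rcases AtR.pair_rel (Q := Q) j hη'le (by linarith : x - η' ≤ x) hj2 with hcov | hcov
        · rw [e2 I, e2 J]
          exact hrank (x - η') x hcov
        · rw [e3 I, e3 J]
          exact hrank x (x - η') hcov
      refine ⟨min (ε/2) ((x - Q.α j)/2), lt_min (by linarith) (by linarith),
        lt_of_le_of_lt (min_le_left _ _) (by linarith), ?_⟩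
      apply key _ (lt_min (by linarith) (by linarith))
      have := min_le_right (ε/2) ((x - Q.α j)/2)
      linarith
    obtain ⟨n, hn⟩ := main_arith I J hIne hIbd hIoc hJne hJbd hJoc hcnt hlat2 hlat2'
    exact ⟨n, bijOn_of_iff _ hn⟩
  · rintro ⟨n, hbij⟩
    have hmem : ∀ β : ℝ, β ∈ I ↔ β + 2 * Real.pi * n ∈ J := by
      intro β
      constructor
      · exact fun h => hbij.mapsTo h
      · intro h
        rw [← hbij.image_eq] at h
        obtain ⟨γ, hγ, he⟩ := h
        have hge : γ = β := by
          have : γ + 2 * Real.pi * n = β + 2 * Real.pi * n := he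
          linarith
        rwa [← hge]
    refine ⟨fun θ => ((eV θ).trans
      (Finsupp.domLCongr (barShiftEquiv I J n hmem θ))).trans (eW θ).symm, ?_, ?_⟩
    · intro θ φ h v
      apply (eW φ).injective
      simp only [LinearEquiv.trans_apply]
      rw [LinearEquiv.apply_symm_apply, hV1 h v,
        barMapHom_shift I J n hmem θ φ (eV θ v), hW1 h _, LinearEquiv.apply_symm_apply]
    · intro θ v
      apply (eW θ).injective
      simp only [LinearEquiv.trans_apply]
      rw [LinearEquiv.apply_symm_apply, hV2 θ v, hW2 θ _, LinearEquiv.apply_symm_apply,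
        domLCongr_eq_equivMapDomain, domLCongr_eq_equivMapDomain,
        ← Finsupp.equivMapDomain_trans, ← Finsupp.equivMapDomain_trans,
        barShift_trans I J n hmem θ]
end OpenCase
end Main
end BarArith
end
end

section
/- Let 𝒫 be a finite partition of S¹ with |𝒫| ≥ 2 into path-connected parts such that the auxiliary quiver Q — with vertex set 𝒫 and an arrow P → P' whenever P ≠ P', P ∪ P' is path-connected, and there exist x ∈ P, y ∈ P' with y ⪯ x — is a quiver of type Ã_{|𝒫|−1} (its underlying undirected graph is a cycle through all vertices). If M is a bar representation of Q, then the push down of M — the representation U of Ã_ℝ with U(x) = M(P) for x ∈ P, U equal to the identity on generating morphisms between points of the same part, and U equal to the composite of the maps of M along the corresponding arrows of Q on generating morphisms between points of distinct parts — is a bar of Ã_ℝ. -/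
open Set

noncomputable section

variable (k : Type) [Field k]

variable {k}

variable (k : Type) [Field k]

variable {k}

/-! ## Auxiliary material for the pushdown theorem -/

namespace PushdownAux

open SRep CircPartition Finsupp

variable {Q : AtR} (C : CircPartition Q)

lemma partZ_def (θ : ℝ) : C.partZ θ = ((C.partIdx θ : ℤ) : ZMod C.N) := rfl

lemma partIdx_mono {θ φ : ℝ} (h : θ ≤ φ) : C.partIdx θ ≤ C.partIdx φ := by
  by_contra hlt
  push_neg at hlt
  exact absurd (C.ordered hlt _ (C.mem_partIdx φ) _ (C.mem_partIdx θ)) (not_lt.mpr h)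

lemma mem_J_shift (n : ℤ) :
    ∀ {θ : ℝ} {j : ℤ}, θ ∈ C.J j → θ + 2 * Real.pi * n ∈ C.J (j + n * C.N) := by
  induction n using Int.induction_on with
  | zero => intro θ j h; simpa using h
  | succ n ih =>
    intro θ j h
    have h2 := (C.jper (j + (n : ℤ) * C.N) (θ + 2 * Real.pi * n)).mp (ih h)
    have e1 : θ + 2 * Real.pi * (((n : ℤ) + 1 : ℤ) : ℝ) = θ + 2 * Real.pi * n + 2 * Real.pi := by
      push_cast; ring
    have e2 : j + ((n : ℤ) + 1) * (C.N : ℤ) = j + (n : ℤ) * C.N + C.N := by ring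
    rw [e1, e2]
    exact h2
  | pred n ih =>
    intro θ j h
    have key := ih h
    have e1 : θ + 2 * Real.pi * ((-(n : ℤ) - 1 : ℤ) : ℝ) + 2 * Real.pi
        = θ + 2 * Real.pi * ((-(n : ℤ) : ℤ) : ℝ) := by push_cast; ring
    have e2 : j + (-(n : ℤ) - 1) * (C.N : ℤ) + (C.N : ℤ) = j + (-(n : ℤ)) * C.N := by ring
    refine (C.jper (j + (-(n : ℤ) - 1) * C.N) (θ + 2 * Real.pi * ((-(n : ℤ) - 1 : ℤ) : ℝ))).mpr ?_
    rw [e1, e2]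
    exact key

lemma partIdx_nshift (θ : ℝ) (n : ℤ) :
    C.partIdx (θ + 2 * Real.pi * n) = C.partIdx θ + n * C.N :=
  C.partIdx_eq (mem_J_shift C n (C.mem_partIdx θ))

/-- The interval on the line corresponding to the bar `{a, …, b}`. -/
def Iset (a b : ℤ) : Set ℝ := {x : ℝ | C.partIdx x ∈ Set.Icc a b}

lemma mem_Iset {a b : ℤ} {x : ℝ} : x ∈ Iset C a b ↔ C.partIdx x ∈ Set.Icc a b := Iff.rfl

lemma Iset_nonempty (a b : ℤ) (hab : a ≤ b) : (Iset C a b).Nonempty := by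
  obtain ⟨x, hx⟩ := C.nonempty a
  refine ⟨x, ?_⟩
  rw [mem_Iset, C.partIdx_eq hx]
  exact ⟨le_rfl, hab⟩

lemma Iset_bounded (a b : ℤ) : Bornology.IsBounded (Iset C a b) := by
  obtain ⟨p, hp⟩ := C.nonempty (a - 1)
  obtain ⟨q, hq⟩ := C.nonempty (b + 1)
  apply (Metric.isBounded_Icc p q).subset
  intro x hx
  rw [mem_Iset, Set.mem_Icc] at hx
  constructor
  · exact le_of_lt (C.ordered (by omega : a - 1 < C.partIdx x) p hp x (C.mem_partIdx x))
  · exact le_of_lt (C.ordered (by omega : C.partIdx x < b + 1) x (C.mem_partIdx x) q hq)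

lemma Iset_ordconn (a b : ℤ) : (Iset C a b).OrdConnected := by
  constructor
  intro x hx y hy z hz
  rw [mem_Iset, Set.mem_Icc] at *
  exact ⟨le_trans hx.1 (partIdx_mono C hz.1), le_trans (partIdx_mono C hz.2) hy.2⟩

lemma N_ne_zero : (C.N : ℤ) ≠ 0 := by
  have := C.hN; omega

lemma dvd_sub_partIdx {m : ℤ} {θ : ℝ} (h : ((m : ℤ) : ZMod C.N) = C.partZ θ) :
    (C.N : ℤ) ∣ m - C.partIdx θ := by
  rw [partZ_def, ZMod.intCast_eq_intCast_iff] at h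
  exact Int.ModEq.dvd h.symm

/-- The identification of the basis of the continuous bar at `θ` with the basis of
the cyclic bar at the part of `θ`. -/
def idxEquiv (a b : ℤ) (θ : ℝ) : barIdx (Iset C a b) θ ≃ cycIdx C.N a b (C.partZ θ) where
  toFun β := ⟨C.partIdx β.1, β.2.1, by
    obtain ⟨n, hn⟩ := β.2.2
    rw [partZ_def, hn, partIdx_nshift]
    push_cast
    simp⟩
  invFun c := ⟨θ + 2 * Real.pi * (((c.1 - C.partIdx θ) / (C.N : ℤ) : ℤ) : ℝ), by
    have hd : (C.N : ℤ) ∣ c.1 - C.partIdx θ := dvd_sub_partIdx C c.2.2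
    have hmul : (c.1 - C.partIdx θ) / (C.N : ℤ) * (C.N : ℤ) = c.1 - C.partIdx θ :=
      Int.ediv_mul_cancel hd
    have hpi : C.partIdx (θ + 2 * Real.pi * (((c.1 - C.partIdx θ) / (C.N : ℤ) : ℤ) : ℝ)) = c.1 := by
      rw [partIdx_nshift, hmul]; ring
    refine ⟨?_, ⟨_, rfl⟩⟩
    rw [mem_Iset, hpi]
    exact c.2.1⟩
  left_inv β := by
    apply Subtype.ext
    obtain ⟨n, hn⟩ := β.2.2
    have hpi : C.partIdx β.1 = C.partIdx θ + n * C.N := by rw [hn, partIdx_nshift]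
    have hdiv : (C.partIdx β.1 - C.partIdx θ) / (C.N : ℤ) = n := by
      rw [hpi]
      rw [show C.partIdx θ + n * (C.N : ℤ) - C.partIdx θ = n * C.N from by ring]
      exact Int.mul_ediv_cancel _ (N_ne_zero C)
    show θ + 2 * Real.pi * (((C.partIdx β.1 - C.partIdx θ) / (C.N : ℤ) : ℤ) : ℝ) = β.1
    rw [hdiv, hn]
  right_inv c := by
    apply Subtype.ext
    have hd : (C.N : ℤ) ∣ c.1 - C.partIdx θ := dvd_sub_partIdx C c.2.2
    have hmul : (c.1 - C.partIdx θ) / (C.N : ℤ) * (C.N : ℤ) = c.1 - C.partIdx θ :=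
      Int.ediv_mul_cancel hd
    show C.partIdx (θ + 2 * Real.pi * _) = c.1
    rw [partIdx_nshift, hmul]; ring

lemma idxEquiv_symm_val (a b : ℤ) (θ : ℝ) (c : cycIdx C.N a b (C.partZ θ)) :
    ((idxEquiv C a b θ).symm c).1
      = θ + 2 * Real.pi * (((c.1 - C.partIdx θ) / (C.N : ℤ) : ℤ) : ℝ) := rfl

/-- Cast between the cyclic bars' bases along an equality of vertices. -/
def castIdx {N : ℕ} (a b : ℤ) {i i' : ZMod N} (h : i = i') : cycIdx N a b i ≃ cycIdx N a b i' :=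
  Equiv.subtypeEquivRight (fun m => by rw [h])

lemma castIdx_val {N : ℕ} (a b : ℤ) {i i' : ZMod N} (h : i = i') (c : cycIdx N a b i) :
    ((castIdx a b h) c).1 = c.1 := rfl

lemma eM_castM {N : ℕ} {o' : ZMod N → Bool} (M : CycRep k N o') (a b : ℤ)
    (eB : ∀ i, M.M i ≃ₗ[k] (cycIdx N a b i →₀ k)) {i i' : ZMod N} (h : i = i') (x : M.M i) :
    eB i' (M.castM h x)
      = (Finsupp.domLCongr (castIdx a b h) :
          (cycIdx N a b i →₀ k) ≃ₗ[k] (cycIdx N a b i' →₀ k)) (eB i x) := by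
  subst h
  have h1 : M.castM (rfl : i = i) = LinearEquiv.refl k (M.M i) := rfl
  have h2 : castIdx (N := N) a b (rfl : i = i) = Equiv.refl _ :=
    Equiv.ext fun x => Subtype.ext rfl
  rw [h1, h2]
  simp [Finsupp.domLCongr_apply, Finsupp.domCongr_apply]

/-- The abstract "shift by `partIdx φ - partIdx θ`" map between the cyclic bars'
spaces. -/
def transM (a b : ℤ) (θ φ : ℝ) :
    (cycIdx C.N a b (C.partZ θ) →₀ k) →ₗ[k] (cycIdx C.N a b (C.partZ φ) →₀ k) :=
  Finsupp.linearCombination k fun c =>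
    if h : c.1 + (C.partIdx φ - C.partIdx θ) ∈ Set.Icc a b then
      Finsupp.single (⟨c.1 + (C.partIdx φ - C.partIdx θ), h, by
        have h2 := c.2.2
        have h3 : ((c.1 + (C.partIdx φ - C.partIdx θ) : ℤ) : ZMod C.N)
            = ((c.1 : ℤ) : ZMod C.N) + ((C.partIdx φ : ℤ) : ZMod C.N)
              - ((C.partIdx θ : ℤ) : ZMod C.N) := by push_cast; ring
        rw [h3, h2, partZ_def C θ, partZ_def C φ]
        ring⟩ : cycIdx C.N a b (C.partZ φ)) (1 : k)
    else 0

lemma cast_eq_transM (a b : ℤ) (θ φ : ℝ) (hp : C.partIdx θ = C.partIdx φ) :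
    ((Finsupp.domLCongr (castIdx a b (C.partZ_congr hp)) :
        (cycIdx C.N a b (C.partZ θ) →₀ k) ≃ₗ[k] (cycIdx C.N a b (C.partZ φ) →₀ k)) :
        (cycIdx C.N a b (C.partZ θ) →₀ k) →ₗ[k] _) = transM C a b θ φ := by
  apply Finsupp.lhom_ext
  intro c x
  have hc : c.1 + (C.partIdx φ - C.partIdx θ) ∈ Set.Icc a b := by
    have h1 := c.2.1
    rw [Set.mem_Icc] at *
    omega
  simp only [LinearEquiv.coe_coe, Finsupp.domLCongr_apply, Finsupp.domCongr_apply,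
    Finsupp.equivMapDomain_single, transM, Finsupp.linearCombination_single, dif_pos hc,
    Finsupp.smul_single', mul_one]
  erw [Finsupp.smul_single', mul_one]
  congr 1
  apply Subtype.ext
  show c.1 = c.1 + (C.partIdx φ - C.partIdx θ)
  omega

lemma up_eq_transM (a b : ℤ) (θ φ : ℝ) (hp : C.partIdx φ = C.partIdx θ + 1) :
    ((Finsupp.domLCongr (castIdx a b (C.partZ_succ hp)) :
        (cycIdx C.N a b (C.partZ θ + 1) →₀ k) ≃ₗ[k] (cycIdx C.N a b (C.partZ φ) →₀ k)) :
        (cycIdx C.N a b (C.partZ θ + 1) →₀ k) →ₗ[k] _) ∘ₗ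
      cycBarUp k C.N a b (C.partZ θ) = transM C a b θ φ := by
  apply Finsupp.lhom_ext
  intro c x
  simp only [LinearMap.comp_apply, cycBarUp, transM, Finsupp.linearCombination_single]
  by_cases hc : c.1 + 1 ∈ Set.Icc a b
  · have hc' : c.1 + (C.partIdx φ - C.partIdx θ) ∈ Set.Icc a b := by
      rw [Set.mem_Icc] at *; omega
    rw [dif_pos hc, dif_pos hc']
    simp only [Finsupp.smul_single', mul_one, LinearEquiv.coe_coe, Finsupp.domLCongr_apply,
      Finsupp.domCongr_apply, Finsupp.equivMapDomain_single]
    erw [Finsupp.smul_single', Finsupp.smul_single', mul_one, Finsupp.equivMapDomain_single]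
    congr 1
    apply Subtype.ext
    show c.1 + 1 = c.1 + (C.partIdx φ - C.partIdx θ)
    omega
  · have hc' : ¬ (c.1 + (C.partIdx φ - C.partIdx θ) ∈ Set.Icc a b) := by
      rw [Set.mem_Icc] at *; omega
    rw [dif_neg hc, dif_neg hc']
    simp

lemma down_eq_transM (a b : ℤ) (θ φ : ℝ) (hp : C.partIdx θ = C.partIdx φ + 1) :
    cycBarDown k C.N a b (C.partZ φ) ∘ₗ
      ((Finsupp.domLCongr (castIdx a b (C.partZ_pred hp)) :
        (cycIdx C.N a b (C.partZ θ) →₀ k) ≃ₗ[k] (cycIdx C.N a b (C.partZ φ + 1) →₀ k)) :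
        (cycIdx C.N a b (C.partZ θ) →₀ k) →ₗ[k] _) = transM C a b θ φ := by
  apply Finsupp.lhom_ext
  intro c x
  simp only [LinearMap.comp_apply, LinearEquiv.coe_coe, Finsupp.domLCongr_apply,
    Finsupp.domCongr_apply, Finsupp.equivMapDomain_single, cycBarDown, transM,
    Finsupp.linearCombination_single]
  by_cases hc : c.1 - 1 ∈ Set.Icc a b
  · have hc' : c.1 + (C.partIdx φ - C.partIdx θ) ∈ Set.Icc a b := by
      rw [Set.mem_Icc] at *; omega
    rw [dif_pos (show ((castIdx a b (C.partZ_pred hp)) c).1 - 1 ∈ Set.Icc a b from hc),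
      dif_pos hc']
    erw [Finsupp.smul_single', Finsupp.smul_single', mul_one]
    congr 1
    apply Subtype.ext
    show c.1 - 1 = c.1 + (C.partIdx φ - C.partIdx θ)
    omega
  · have hc' : ¬ (c.1 + (C.partIdx φ - C.partIdx θ) ∈ Set.Icc a b) := by
      rw [Set.mem_Icc] at *; omega
    rw [dif_neg (show ¬ (((castIdx a b (C.partZ_pred hp)) c).1 - 1 ∈ Set.Icc a b) from hc),
      dif_neg hc']

lemma transM_comp (a b : ℤ) (θ z φ : ℝ)
    (hbet : (C.partIdx θ ≤ C.partIdx z ∧ C.partIdx z ≤ C.partIdx φ) ∨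
      (C.partIdx φ ≤ C.partIdx z ∧ C.partIdx z ≤ C.partIdx θ)) :
    (transM C a b z φ : (cycIdx C.N a b (C.partZ z) →₀ k) →ₗ[k] _) ∘ₗ (transM C a b θ z)
      = transM C a b θ φ := by
  apply Finsupp.lhom_ext
  intro c x
  have hc0 := c.2.1
  rw [Set.mem_Icc] at hc0
  simp only [LinearMap.comp_apply, transM, Finsupp.linearCombination_single]
  by_cases h1 : c.1 + (C.partIdx z - C.partIdx θ) ∈ Set.Icc a b
  · rw [dif_pos h1]
    erw [Finsupp.smul_single', mul_one, Finsupp.linearCombination_single]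
    by_cases h2 : c.1 + (C.partIdx z - C.partIdx θ) + (C.partIdx φ - C.partIdx z) ∈ Set.Icc a b
    · have h3 : c.1 + (C.partIdx φ - C.partIdx θ) ∈ Set.Icc a b := by
        rw [Set.mem_Icc] at *; omega
      rw [dif_pos h2, dif_pos h3]
      simp only [Finsupp.smul_single', mul_one]
      congr 1
      congr 1
      apply Subtype.ext
      show c.1 + (C.partIdx z - C.partIdx θ) + (C.partIdx φ - C.partIdx z)
        = c.1 + (C.partIdx φ - C.partIdx θ)
      ring
    · have h3 : ¬ (c.1 + (C.partIdx φ - C.partIdx θ) ∈ Set.Icc a b) := by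
        rw [Set.mem_Icc] at *; omega
      rw [dif_neg h2, dif_neg h3]
  · rw [dif_neg h1]
    have h3 : ¬ (c.1 + (C.partIdx φ - C.partIdx θ) ∈ Set.Icc a b) := by
      rw [Set.mem_Icc] at *; omega
    rw [dif_neg h3]
    simp

lemma transM_bar (a b : ℤ) (θ φ : ℝ) :
    ((Finsupp.domLCongr ((idxEquiv C a b φ).symm) :
        (cycIdx C.N a b (C.partZ φ) →₀ k) ≃ₗ[k] (barIdx (Iset C a b) φ →₀ k)) :
        (cycIdx C.N a b (C.partZ φ) →₀ k) →ₗ[k] _) ∘ₗ transM C a b θ φ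
      = barMapHom k (Iset C a b) θ φ ∘ₗ
        ((Finsupp.domLCongr ((idxEquiv C a b θ).symm) :
          (cycIdx C.N a b (C.partZ θ) →₀ k) ≃ₗ[k] (barIdx (Iset C a b) θ →₀ k)) :
          (cycIdx C.N a b (C.partZ θ) →₀ k) →ₗ[k] _) := by
  apply Finsupp.lhom_ext
  intro c x
  have hd : (C.N : ℤ) ∣ c.1 - C.partIdx θ := dvd_sub_partIdx C c.2.2
  have hmul : (c.1 - C.partIdx θ) / (C.N : ℤ) * (C.N : ℤ) = c.1 - C.partIdx θ :=
    Int.ediv_mul_cancel hd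
  have harg : ((idxEquiv C a b θ).symm c).1 - θ + φ
      = φ + 2 * Real.pi * ((((c.1 - C.partIdx θ) / (C.N : ℤ) : ℤ)) : ℝ) := by
    rw [idxEquiv_symm_val]; ring
  have hpmem : C.partIdx (φ + 2 * Real.pi * ((((c.1 - C.partIdx θ) / (C.N : ℤ) : ℤ)) : ℝ))
      = c.1 + (C.partIdx φ - C.partIdx θ) := by
    rw [partIdx_nshift, hmul]
    ring
  have hmem : (((idxEquiv C a b θ).symm c).1 - θ + φ ∈ Iset C a b) ↔
      (c.1 + (C.partIdx φ - C.partIdx θ) ∈ Set.Icc a b) := by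
    rw [harg, mem_Iset, hpmem]
  simp only [LinearMap.comp_apply, LinearEquiv.coe_coe, Finsupp.domLCongr_apply,
    Finsupp.domCongr_apply, Finsupp.equivMapDomain_single, transM, barMapHom,
    Finsupp.linearCombination_single]
  by_cases hc : c.1 + (C.partIdx φ - C.partIdx θ) ∈ Set.Icc a b
  · rw [dif_pos hc, dif_pos (hmem.mpr hc)]
    erw [Finsupp.smul_single', mul_one, Finsupp.equivMapDomain_single, Finsupp.smul_single',
      mul_one]
    congr 1
    apply Subtype.ext
    show φ + 2 * Real.pi
        * ((((c.1 + (C.partIdx φ - C.partIdx θ) - C.partIdx φ) / (C.N : ℤ) : ℤ)) : ℝ)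
      = ((idxEquiv C a b θ).symm c).1 - θ + φ
    rw [show c.1 + (C.partIdx φ - C.partIdx θ) - C.partIdx φ = c.1 - C.partIdx θ from by ring,
      harg]
  · rw [dif_neg hc, dif_neg (fun hh => hc (hmem.mp hh))]
    simp

lemma idxEquiv_shift (a b : ℤ) (θ : ℝ) (c : cycIdx C.N a b (C.partZ (θ + 2 * Real.pi))) :
    (idxEquiv C a b θ).symm ((castIdx a b (C.partZ_shift θ)) c)
      = barShift (Iset C a b) θ ((idxEquiv C a b (θ + 2 * Real.pi)).symm c) := by
  apply Subtype.ext
  have h1 : ((idxEquiv C a b θ).symm ((castIdx a b (C.partZ_shift θ)) c)).1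
      = θ + 2 * Real.pi * (((c.1 - C.partIdx θ) / (C.N : ℤ) : ℤ) : ℝ) := rfl
  have h2 : (barShift (Iset C a b) θ ((idxEquiv C a b (θ + 2 * Real.pi)).symm c)).1
      = (θ + 2 * Real.pi)
        + 2 * Real.pi * (((c.1 - C.partIdx (θ + 2 * Real.pi)) / (C.N : ℤ) : ℤ) : ℝ) := rfl
  rw [h1, h2, C.partIdx_shift θ]
  have h3 : c.1 - (C.partIdx θ + C.N) = (c.1 - C.partIdx θ) + (-1) * (C.N : ℤ) := by ring
  rw [h3, Int.add_mul_ediv_right _ _ (N_ne_zero C)]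
  push_cast
  ring

lemma covRel_sub_up {θ φ x y : ℝ} (h : Q.covRel θ φ) (hθφ : θ ≤ φ)
    (h1 : θ ≤ x) (h2 : x ≤ y) (h3 : y ≤ φ) : Q.covRel x y := by
  by_cases hm : Q.m = 0
  · unfold AtR.covRel
    rw [if_pos hm]
    exact h2
  · unfold AtR.covRel at h ⊢
    rw [if_neg hm] at h ⊢
    obtain ⟨j, hθ, hφ, hdir⟩ := h
    refine ⟨j, ⟨le_trans hθ.1 h1, le_trans (h2.trans h3) hφ.2⟩,
      ⟨le_trans hθ.1 (h1.trans h2), le_trans h3 hφ.2⟩, ?_⟩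
    rcases hdir with ⟨he, hle⟩ | ⟨ho', hle⟩
    · exact Or.inl ⟨he, by linarith⟩
    · exact Or.inr ⟨ho', h2⟩

lemma covRel_sub_down {θ φ x y : ℝ} (h : Q.covRel θ φ) (hφθ : φ ≤ θ)
    (h1 : φ ≤ y) (h2 : y ≤ x) (h3 : x ≤ θ) : Q.covRel x y := by
  by_cases hm : Q.m = 0
  · unfold AtR.covRel at h ⊢
    rw [if_pos hm] at h ⊢
    linarith
  · unfold AtR.covRel at h ⊢
    rw [if_neg hm] at h ⊢
    obtain ⟨j, hθ, hφ, hdir⟩ := h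
    refine ⟨j, ⟨le_trans hφ.1 (h1.trans h2), le_trans h3 hθ.2⟩,
      ⟨le_trans hφ.1 h1, le_trans (h2.trans h3) hθ.2⟩, ?_⟩
    rcases hdir with ⟨he, hle⟩ | ⟨ho', hle⟩
    · exact Or.inl ⟨he, h2⟩
    · exact Or.inr ⟨ho', by linarith⟩

end PushdownAux

open PushdownAux

/-! ## Statement 5 -/

/-- If the auxiliary quiver of the partition `C` is the `Ã_{N-1}` quiver with
orientation `o` and `M` is a bar representation of it, then its push down is a
bar of the continuous quiver. -/
theorem pushdown_bar {k : Type} [Field k] {Q : AtR} (C : CircPartition Q)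
    (o : ZMod C.N → Bool)
    (ho : ∀ j : ℤ, ((o (j : ZMod C.N) = true) ↔ C.dirUp j) ∧
      ((o (j : ZMod C.N) = false) ↔ C.dirDown j))
    (M : CycRep k C.N o) (a b : ℤ) (hbar : CycRep.BarOn a b M)
    (U : SRep k Q) (hU : SRep.PushdownOf C o M U) : SRep.IsBar U := by
  obtain ⟨hab, eB, hBup, hBdown⟩ := hbar
  obtain ⟨eU, hU1, hU2, hU3, hU4⟩ := hU
  -- elementary step within a part
  have step0 : ∀ {θ φ : ℝ} (h : Q.covRel θ φ) (hp : C.partIdx θ = C.partIdx φ) (v : U.obj θ),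
      eB (C.partZ φ) (eU φ (U.map h v)) = transM C a b θ φ (eB (C.partZ θ) (eU θ v)) := by
    intro θ φ h hp v
    rw [hU1 h hp v, eM_castM M a b eB (C.partZ_congr hp) (eU θ v)]
    have h2 := LinearMap.congr_fun (cast_eq_transM C a b θ φ hp) (eB (C.partZ θ) (eU θ v))
    simpa using h2
  -- elementary step going up one part
  have stepUp : ∀ {θ φ : ℝ} (h : Q.covRel θ φ) (hp : C.partIdx φ = C.partIdx θ + 1)
      (v : U.obj θ),
      eB (C.partZ φ) (eU φ (U.map h v)) = transM C a b θ φ (eB (C.partZ θ) (eU θ v)) := by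
    intro θ φ h hp v
    have ht : o (C.partZ θ) = true := by
      refine (ho (C.partIdx θ)).1.mpr ⟨θ, C.mem_partIdx θ, φ, ?_, h⟩
      rw [← hp]
      exact C.mem_partIdx φ
    rw [hU2 h hp ht v, eM_castM M a b eB (C.partZ_succ hp), hBup (C.partZ θ) ht (eU θ v)]
    have h2 := LinearMap.congr_fun (up_eq_transM C a b θ φ hp) (eB (C.partZ θ) (eU θ v))
    simpa using h2
  -- elementary step going down one part
  have stepDown : ∀ {θ φ : ℝ} (h : Q.covRel θ φ) (hp : C.partIdx θ = C.partIdx φ + 1)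
      (v : U.obj θ),
      eB (C.partZ φ) (eU φ (U.map h v)) = transM C a b θ φ (eB (C.partZ θ) (eU θ v)) := by
    intro θ φ h hp v
    have hf : o (C.partZ φ) = false := by
      refine (ho (C.partIdx φ)).2.mpr ⟨θ, ?_, φ, C.mem_partIdx φ, h⟩
      rw [← hp]
      exact C.mem_partIdx θ
    rw [hU3 h hp hf v, hBdown (C.partZ φ) hf _,
      eM_castM M a b eB (C.partZ_pred hp) (eU θ v)]
    have h2 := LinearMap.congr_fun (down_eq_transM C a b θ φ hp) (eB (C.partZ θ) (eU θ v))
    simpa using h2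
  -- induction going up
  have mainUp : ∀ (d : ℕ), ∀ (θ φ : ℝ) (h : Q.covRel θ φ), θ ≤ φ →
      C.partIdx φ = C.partIdx θ + d → ∀ (v : U.obj θ),
      eB (C.partZ φ) (eU φ (U.map h v)) = transM C a b θ φ (eB (C.partZ θ) (eU θ v)) := by
    intro d
    induction d with
    | zero => intro θ φ h hle hp v; exact step0 h (by omega) v
    | succ d ih =>
      intro θ φ h hle hp v
      by_cases hc : C.partIdx φ = C.partIdx θ + 1
      · exact stepUp h hc v
      · obtain ⟨z, hz⟩ := C.nonempty (C.partIdx θ + 1)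
        have hpz : C.partIdx z = C.partIdx θ + 1 := C.partIdx_eq hz
        have h1z : θ < z := C.ordered (by omega) θ (C.mem_partIdx θ) z hz
        have hzφ : z < φ := C.ordered (by omega) z hz φ (C.mem_partIdx φ)
        have h1 : Q.covRel θ z := covRel_sub_up h hle le_rfl h1z.le hzφ.le
        have h2 : Q.covRel z φ := covRel_sub_up h hle h1z.le hzφ.le le_rfl
        have hcomp := LinearMap.congr_fun (U.map_comp h1 h2 h) v
        simp only [LinearMap.comp_apply] at hcomp
        rw [hcomp, ih z φ h2 hzφ.le (by omega) (U.map h1 v), stepUp h1 hpz v]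
        have h3 := LinearMap.congr_fun
          (transM_comp C a b θ z φ (Or.inl ⟨by omega, by omega⟩)) (eB (C.partZ θ) (eU θ v))
        simpa using h3
  -- induction going down
  have mainDown : ∀ (d : ℕ), ∀ (θ φ : ℝ) (h : Q.covRel θ φ), φ ≤ θ →
      C.partIdx θ = C.partIdx φ + d → ∀ (v : U.obj θ),
      eB (C.partZ φ) (eU φ (U.map h v)) = transM C a b θ φ (eB (C.partZ θ) (eU θ v)) := by
    intro d
    induction d with
    | zero => intro θ φ h hle hp v; exact step0 h (by omega) v
    | succ d ih =>
      intro θ φ h hle hp v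
      by_cases hc : C.partIdx θ = C.partIdx φ + 1
      · exact stepDown h hc v
      · obtain ⟨z, hz⟩ := C.nonempty (C.partIdx θ - 1)
        have hpz : C.partIdx z = C.partIdx θ - 1 := C.partIdx_eq hz
        have hzθ : z < θ := C.ordered (by omega) z hz θ (C.mem_partIdx θ)
        have hφz : φ < z := C.ordered (by omega) φ (C.mem_partIdx φ) z hz
        have h1 : Q.covRel θ z := covRel_sub_down h hle hφz.le hzθ.le le_rfl
        have h2 : Q.covRel z φ := covRel_sub_down h hle le_rfl hφz.le hzθ.le
        have hcomp := LinearMap.congr_fun (U.map_comp h1 h2 h) v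
        simp only [LinearMap.comp_apply] at hcomp
        rw [hcomp, ih z φ h2 hφz.le (by omega) (U.map h1 v),
          stepDown h1 (by omega) v]
        have h3 := LinearMap.congr_fun
          (transM_comp C a b θ z φ (Or.inr ⟨by omega, by omega⟩)) (eB (C.partZ θ) (eU θ v))
        simpa using h3
  have main : ∀ (θ φ : ℝ) (h : Q.covRel θ φ) (v : U.obj θ),
      eB (C.partZ φ) (eU φ (U.map h v)) = transM C a b θ φ (eB (C.partZ θ) (eU θ v)) := by
    intro θ φ h v
    rcases le_total θ φ with hle | hle
    · have hpm := partIdx_mono C hle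
      exact mainUp (C.partIdx φ - C.partIdx θ).toNat θ φ h hle (by omega) v
    · have hpm := partIdx_mono C hle
      exact mainDown (C.partIdx θ - C.partIdx φ).toNat θ φ h hle (by omega) v
  refine ⟨Iset C a b, Iset_nonempty C a b hab, Iset_bounded C a b, Iset_ordconn C a b,
    fun θ => (eU θ).trans ((eB (C.partZ θ)).trans (Finsupp.domLCongr (idxEquiv C a b θ).symm)),
    ?_, ?_⟩
  · intro θ φ h v
    simp only [LinearEquiv.trans_apply]
    rw [main θ φ h v]
    have h2 := LinearMap.congr_fun (transM_bar C a b θ φ) (eB (C.partZ θ) (eU θ v))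
    simpa using h2
  · intro θ v
    simp only [LinearEquiv.trans_apply]
    rw [hU4 θ v, eM_castM M a b eB (C.partZ_shift θ) (eU (θ + 2 * Real.pi) v)]
    simp only [Finsupp.domLCongr_apply, Finsupp.domCongr_apply]
    rw [← Finsupp.equivMapDomain_trans, ← Finsupp.equivMapDomain_trans]
    congr 1
    exact Equiv.ext fun c => idxEquiv_shift C a b θ c
end
end
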